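/- arXiv:2509.04004 — 4 statements merged into one kernel-verified Lean document; each statement's English description precedes it below -/
import Mathlib

section
/- Consider k ≥ 2 distinct points on the unit circle, with clockwise angular gaps forming a sequence with pairwise distinct cyclic rotations (rotationally asymmetric configuration). Adding one new point at an empty location, if the resulting configuration is still rotationally asymmetric, then the true leader of the new configuration lies in the closed clockwise arc from the old true leader to the new point. -/
open Real
open scoped Classical

noncomputable section

/-- Clockwise angular distance from `p` to `q`, a real number in `[0, 2π)`. -/
def cw (p q : Real.Angle) : ℝ :=
  if 0 ≤ (q - p).toReal then (q - p).toReal else (q - p).toReal + 2 * π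

/-- The sorted list of clockwise distances from `p` to the points of `S`. -/
def dists (S : Finset Real.Angle) (p : Real.Angle) : List ℝ :=
  (S.image (cw p)).sort (· ≤ ·)

/-- The clockwise angular-gap sequence of `p` with respect to the configuration `S`:
the sequence of clockwise gaps between consecutive points, starting from `p`. -/
def gapSeq (S : Finset Real.Angle) (p : Real.Angle) : List ℝ :=
  List.zipWith (fun a b => a - b) ((dists S p).tail ++ [2 * π]) (dists S p)

/-- Lexicographic strict order on lists of reals. -/
def lexLt (a b : List ℝ) : Prop := List.Lex (· < ·) a b

/-- `L` is the true leader of `S`: its angular-gap sequence is lexicographically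
strictly smallest. -/
def TrueLeader (S : Finset Real.Angle) (L : Real.Angle) : Prop :=
  L ∈ S ∧ ∀ r ∈ S, r ≠ L → lexLt (gapSeq S L) (gapSeq S r)

/-- `S` is rotationally asymmetric: no nontrivial rotation about the center fixes `S`. -/
def RotAsym (S : Finset Real.Angle) : Prop :=
  ∀ θ : Real.Angle, θ ≠ 0 → S.image (· + θ) ≠ S

/-- The antipodal position of a point on the circle. -/
def antipode (p : Real.Angle) : Real.Angle := p + (π : Real.Angle)

/-- The hypothetical configuration in which the antipode of `r` is unoccupied. -/
def C0 (S : Finset Real.Angle) (r : Real.Angle) : Finset Real.Angle := S.erase (antipode r)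

/-- The hypothetical configuration in which the antipode of `r` is occupied. -/
def C1 (S : Finset Real.Angle) (r : Real.Angle) : Finset Real.Angle := insert (antipode r) S

/-- `r` is an undecided leader: both hypothetical configurations are rotationally
asymmetric and `r` is the true leader of exactly one of them. -/
def Undecided (S : Finset Real.Angle) (r : Real.Angle) : Prop :=
  r ∈ S ∧ RotAsym (C0 S r) ∧ RotAsym (C1 S r) ∧
    Xor' (TrueLeader (C0 S r) r) (TrueLeader (C1 S r) r)

/-- `r` is a cognizant leader: `r` is the true leader in every consistent
(hypothetical) configuration. -/
def Cognizant (S : Finset Real.Angle) (r : Real.Angle) : Prop :=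
  r ∈ S ∧ (RotAsym (C0 S r) → TrueLeader (C0 S r) r) ∧
    (RotAsym (C1 S r) → TrueLeader (C1 S r) r)

/-- An expected leader is a cognizant leader or an undecided leader. -/
def ExpectedLeader (S : Finset Real.Angle) (r : Real.Angle) : Prop :=
  Cognizant S r ∨ Undecided S r

namespace Stmt5Aux

lemma cw_nonneg (p q : Real.Angle) : 0 ≤ cw p q := by
  unfold cw
  split_ifs with h
  · exact h
  · nlinarith [Real.Angle.neg_pi_lt_toReal (q - p), Real.pi_pos]

lemma cw_lt_two_pi (p q : Real.Angle) : cw p q < 2 * π := by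
  unfold cw
  split_ifs with h
  · nlinarith [Real.Angle.toReal_le_pi (q - p), Real.pi_pos]
  · push_neg at h; linarith

lemma coe_cw (p q : Real.Angle) : ((cw p q : ℝ) : Real.Angle) = q - p := by
  unfold cw
  split_ifs with h
  · exact Real.Angle.coe_toReal _
  · rw [Real.Angle.coe_add, Real.Angle.coe_two_pi, add_zero, Real.Angle.coe_toReal]

lemma cw_injective (p : Real.Angle) : Function.Injective (cw p) := by
  intro a b hab
  have : ((cw p a : ℝ) : Real.Angle) = ((cw p b : ℝ) : Real.Angle) := by rw [hab]
  rw [coe_cw, coe_cw] at this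
  exact sub_left_injective this

lemma cw_self (p : Real.Angle) : cw p p = 0 := by
  simp [cw]

lemma mem_dists {S : Finset Real.Angle} {p : Real.Angle} {a : ℝ} :
    a ∈ dists S p ↔ ∃ r ∈ S, cw p r = a := by
  simp [dists, Finset.mem_sort, Finset.mem_image]

lemma dists_length (S : Finset Real.Angle) (p : Real.Angle) :
    (dists S p).length = S.card := by
  rw [dists, Finset.length_sort, Finset.card_image_of_injective _ (cw_injective p)]

lemma dists_head? {S : Finset Real.Angle} {p : Real.Angle} (hp : p ∈ S) :
    (dists S p).head? = some 0 := by
  have h0 : (0 : ℝ) ∈ dists S p := mem_dists.mpr ⟨p, hp, cw_self p⟩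
  have hs : List.Pairwise (· ≤ ·) (dists S p) := Finset.pairwise_sort _ _
  cases hD : dists S p with
  | nil => rw [hD] at h0; simp at h0
  | cons c t =>
    rw [hD] at hs h0
    have hc : 0 ≤ c := by
      obtain ⟨r, _, hre⟩ := mem_dists.mp (hD ▸ (List.mem_cons_self : c ∈ c :: t))
      rw [← hre]; exact cw_nonneg p r
    have hc' : c ≤ 0 := by
      rcases List.mem_cons.mp h0 with h | h
      · exact le_of_eq h.symm
      · exact (List.pairwise_cons.mp hs).1 0 h
    simp [le_antisymm hc' hc]

lemma sort_insert_eq (F : Finset ℝ) (x : ℝ) (hx : x ∉ F) :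
    (insert x F).sort (· ≤ ·) = List.orderedInsert (· ≤ ·) x (F.sort (· ≤ ·)) := by
  refine List.Perm.eq_of_pairwise' (Finset.pairwise_sort _ _)
    (List.Pairwise.orderedInsert x _ (Finset.pairwise_sort _ _)) ?_
  exact ((Finset.sort_perm_toList _ _).trans ((Finset.toList_insert hx).trans
    (List.Perm.cons _ (Finset.sort_perm_toList _ _).symm))).trans
    (List.perm_orderedInsert _ _ _).symm

lemma cw_not_mem {S : Finset Real.Angle} {q : Real.Angle} (hq : q ∉ S) (p : Real.Angle) :
    cw p q ∉ dists S p := by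
  intro hm
  obtain ⟨r, hr, hre⟩ := mem_dists.mp hm
  exact hq (cw_injective p hre ▸ hr)

lemma dists_insert {S : Finset Real.Angle} {q : Real.Angle} (hq : q ∉ S) (p : Real.Angle) :
    dists (insert q S) p = List.orderedInsert (· ≤ ·) (cw p q) (dists S p) := by
  unfold dists
  rw [Finset.image_insert, sort_insert_eq]
  intro hm
  obtain ⟨r, hr, hre⟩ := Finset.mem_image.mp hm
  exact hq (cw_injective p hre ▸ hr)

def gl (T : ℝ) (D : List ℝ) : List ℝ := List.zipWith (fun a b => a - b) (D.tail ++ [T]) D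

lemma gapSeq_eq (S : Finset Real.Angle) (p : Real.Angle) : gapSeq S p = gl (2 * π) (dists S p) := rfl

lemma gl_lex (T : ℝ) (A : List ℝ) : ∀ (B : List ℝ), A.length = B.length →
    A.head? = B.head? → List.Lex (· < ·) A B → List.Lex (· < ·) (gl T A) (gl T B) := by
  induction A with
  | nil =>
    intro B hlen _ h
    cases B with
    | nil => cases h
    | cons b B₁ => simp at hlen
  | cons a A₁ ih =>
    intro B hlen hhd h
    cases B with
    | nil => simp at hlen
    | cons b B₁ =>
      simp only [List.head?_cons, Option.some.injEq] at hhd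
      subst hhd
      cases h with
      | rel hr => exact absurd hr (lt_irrefl a)
      | cons h₁ =>
        cases A₁ with
        | nil =>
          cases B₁ with
          | nil => cases h₁
          | cons b₁ B₂ => simp at hlen
        | cons a₁ A₂ =>
          cases B₁ with
          | nil => simp at hlen
          | cons b₁ B₂ =>
            cases h₁ with
            | rel hr =>
              exact List.Lex.rel (sub_lt_sub_right hr a)
            | cons h₂ =>
              show List.Lex (· < ·) ((a₁ - a) :: gl T (a₁ :: A₂)) ((a₁ - a) :: gl T (a₁ :: B₂))
              exact List.Lex.cons (ih (a₁ :: B₂) (by simpa using hlen) rfl (List.Lex.cons h₂))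

lemma oi_lex (A : List ℝ) : ∀ (B : List ℝ) (x y : ℝ), A.length = B.length → x < y → x ∉ A →
    List.Lex (· < ·) A B →
    List.Lex (· < ·) (List.orderedInsert (· ≤ ·) x A) (List.orderedInsert (· ≤ ·) y B) := by
  induction A with
  | nil =>
    intro B x y hlen _ _ h
    cases B with
    | nil => cases h
    | cons b B₁ => simp at hlen
  | cons a A₁ ih =>
    intro B x y hlen hxy hxA h
    cases B with
    | nil => simp at hlen
    | cons b B₁ =>
      simp only [List.orderedInsert]
      cases h with
      | rel hr =>
        split_ifs with h1 h2 h2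
        · exact List.Lex.rel hxy
        · exact List.Lex.rel (lt_of_le_of_lt h1 hr)
        · exact List.Lex.rel (lt_trans (not_le.mp h1) hxy)
        · exact List.Lex.rel hr
      | cons h₁ =>
        have hxa : x ≠ a := fun hh => hxA (hh ▸ (List.mem_cons_self : a ∈ a :: A₁))
        split_ifs with h1 h2 h2
        · exact List.Lex.rel hxy
        · exact List.Lex.rel (lt_of_le_of_ne h1 hxa)
        · exact absurd (le_trans h2 (le_of_not_ge h1)) (not_le.mpr hxy)
        · exact List.Lex.cons (ih B₁ x y (by simpa using hlen) hxy
            (fun hm => hxA (List.mem_cons_of_mem a hm)) h₁)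

lemma cw_rel {L L' q : Real.Angle} (hcon : cw L q < cw L L') : cw L q < cw L' q := by
  have h1 : ((cw L' q - (cw L q - cw L L') : ℝ) : Real.Angle) = ((0 : ℝ) : Real.Angle) := by
    rw [Real.Angle.coe_sub, Real.Angle.coe_sub, coe_cw, coe_cw, coe_cw, Real.Angle.coe_zero]
    abel
  obtain ⟨k, hk⟩ := Real.Angle.angle_eq_iff_two_pi_dvd_sub.mp h1
  rw [sub_zero] at hk
  have b1 := cw_nonneg L q
  have b2 := cw_nonneg L' q
  have b3 := cw_lt_two_pi L L'
  have b4 := cw_lt_two_pi L' q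
  have hpi := Real.pi_pos
  have hk1 : k = 1 := by
    have hkpos : (0 : ℝ) < k := by nlinarith
    have hklt : (k : ℝ) < 2 := by nlinarith
    have : (0 : ℤ) < k := by exact_mod_cast hkpos
    have : k < 2 := by exact_mod_cast hklt
    omega
  rw [hk1] at hk
  push_cast at hk
  linarith

end Stmt5Aux

open Stmt5Aux in
theorem stmt5 (S : Finset Real.Angle) (h2 : 2 ≤ S.card) (hasym : RotAsym S)
    (L : Real.Angle) (hL : TrueLeader S L)
    (q : Real.Angle) (hq : q ∉ S) (hasym' : RotAsym (insert q S))
    (L' : Real.Angle) (hL' : TrueLeader (insert q S) L') :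
    cw L L' ≤ cw L q := by
  by_contra hcon
  push_neg at hcon
  rcases Finset.mem_insert.mp hL'.1 with rfl | hLS'
  · exact lt_irrefl _ hcon
  · have hLL' : L' ≠ L := by
      rintro rfl
      rw [cw_self] at hcon
      exact absurd hcon (not_lt.mpr (cw_nonneg L' q))
    have hLmem := hL.1
    have hlen : (dists S L).length = (dists S L').length := by
      rw [dists_length, dists_length]
    have hhd : (dists S L).head? = (dists S L').head? := by
      rw [dists_head? hLmem, dists_head? hLS']
    have hg1 : List.Lex (· < ·) (gapSeq S L) (gapSeq S L') := hL.2 L' hLS' hLL'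
    have hAB : List.Lex (· < ·) (dists S L) (dists S L') := by
      rcases trichotomous_of (List.Lex ((· < ·) : ℝ → ℝ → Prop)) (dists S L) (dists S L')
        with h | h | h
      · exact h
      · rw [gapSeq_eq, gapSeq_eq, h] at hg1
        exact absurd hg1 (asymm_of (List.Lex ((· < ·) : ℝ → ℝ → Prop)) hg1)
      · have h2' := gl_lex (2 * π) (dists S L') (dists S L) hlen.symm hhd.symm h
        rw [← gapSeq_eq, ← gapSeq_eq] at h2'
        exact absurd h2' (asymm_of (List.Lex ((· < ·) : ℝ → ℝ → Prop)) hg1)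
    have hxy : cw L q < cw L' q := cw_rel hcon
    have hxA : cw L q ∉ dists S L := cw_not_mem hq L
    have h5 : List.Lex (· < ·) (dists (insert q S) L) (dists (insert q S) L') := by
      rw [dists_insert hq, dists_insert hq]
      exact oi_lex _ _ _ _ hlen hxy hxA hAB
    have h6 : List.Lex (· < ·) (gapSeq (insert q S) L) (gapSeq (insert q S) L') := by
      rw [gapSeq_eq, gapSeq_eq]
      exact gl_lex _ _ _ (by rw [dists_length, dists_length])
        (by rw [dists_head? (Finset.mem_insert_of_mem hLmem), dists_head? hL'.1]) h5
    have h7 : List.Lex (· < ·) (gapSeq (insert q S) L') (gapSeq (insert q S) L) :=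
      hL'.2 L (Finset.mem_insert_of_mem hLmem) (Ne.symm hLL')
    exact absurd h7 (asymm_of (List.Lex ((· < ·) : ℝ → ℝ → Prop)) h6)
end
end

section
/- Let C be a rotationally asymmetric finite configuration of points on a circle with no multiplicity, with true leader L. For a point r of C, let C₀(r) = C \ {antipode of r} and C₁(r) = C ∪ {antipode of r}. If r ≠ L is such that both C₀(r) and C₁(r) are rotationally asymmetric and r is the true leader of exactly one of them, then r is the true leader of C₀(r) and not of C₁(r); i.e., a non-leader point can be an 'undecided leader' only when its antipodal position on the circle is occupied in C₁ considerations, never by being leader only in the configuration with the antipode added. -/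
open Real
open scoped Classical

noncomputable section

namespace Stmt6Aux

open Real List

lemma two_pi_pos : (0:ℝ) < 2 * π := by positivity

/-! ### cw lemmas -/

lemma cw_nonneg (p q : Real.Angle) : 0 ≤ cw p q := by
  unfold cw; split
  · assumption
  · have h := Real.Angle.toReal_mem_Ioc (q - p)
    have := Real.pi_pos
    have h1 := h.1
    linarith

lemma cw_lt_two_pi (p q : Real.Angle) : cw p q < 2 * π := by
  unfold cw; split
  · have h := (Real.Angle.toReal_mem_Ioc (q - p)).2
    have := Real.pi_pos
    linarith
  · rename_i h
    push_neg at h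
    linarith

lemma coe_cw (p q : Real.Angle) : ((cw p q : ℝ) : Real.Angle) = q - p := by
  unfold cw; split
  · exact Real.Angle.coe_toReal _
  · rw [Real.Angle.coe_add, Real.Angle.coe_two_pi, add_zero, Real.Angle.coe_toReal]

lemma cw_eq_iff {p q : Real.Angle} {x : ℝ} (hx0 : 0 ≤ x) (hx2 : x < 2 * π) :
    cw p q = x ↔ (x : Real.Angle) = q - p := by
  constructor
  · rintro rfl; exact coe_cw p q
  · intro h
    have h2 : ((cw p q : ℝ) : Real.Angle) = ((x : ℝ) : Real.Angle) := by rw [coe_cw, h]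
    obtain ⟨k, hk⟩ := Real.Angle.angle_eq_iff_two_pi_dvd_sub.mp h2
    have h1 := cw_nonneg p q
    have h3 := cw_lt_two_pi p q
    have htp := two_pi_pos
    have hk1 : (k : ℝ) < 1 := by nlinarith
    have hk2 : (-1 : ℝ) < (k : ℝ) := by nlinarith
    have hk0 : (k : ℤ) = 0 := by
      have a1 : k < 1 := by exact_mod_cast hk1
      have a2 : -1 < k := by exact_mod_cast hk2
      omega
    rw [hk0] at hk
    push_cast at hk
    linarith



lemma cw_self (p : Real.Angle) : cw p p = 0 := by
  rw [cw_eq_iff le_rfl two_pi_pos]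
  simp

lemma cw_inj (p : Real.Angle) : Function.Injective (cw p) := by
  intro q1 q2 h
  have h1 := coe_cw p q1
  have h2 := coe_cw p q2
  rw [h] at h1
  have := h1.symm.trans h2
  exact sub_left_injective this

lemma cw_antipode (r : Real.Angle) : cw r (antipode r) = π := by
  rw [cw_eq_iff Real.pi_pos.le (by have := Real.pi_pos; linarith)]
  unfold antipode
  abel

lemma cw_rot (p q x : Real.Angle) :
    cw q x = if cw p q ≤ cw p x then cw p x - cw p q else cw p x - cw p q + 2 * π := by
  have h1 := cw_nonneg p q
  have h2 := cw_nonneg p x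
  have h3 := cw_lt_two_pi p q
  have h4 := cw_lt_two_pi p x
  have key : ∀ y : ℝ, ((y : ℝ) : Real.Angle) = ((cw p x - cw p q : ℝ) : Real.Angle) → 0 ≤ y → y < 2*π → cw q x = y := by
    intro y hy hy0 hy2
    rw [cw_eq_iff hy0 hy2, hy]
    rw [Real.Angle.coe_sub, coe_cw, coe_cw]
    abel
  split
  · rename_i h
    exact key _ rfl (by linarith) (by linarith)
  · rename_i h
    push_neg at h
    refine key _ ?_ (by linarith) (by linarith)
    rw [Real.Angle.coe_add, Real.Angle.coe_two_pi, add_zero]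

/-! ### lex machinery -/

lemma lexLt_of_getElem {xs ys : List ℝ} {i : ℕ} (hix : i < xs.length) (hiy : i < ys.length)
    (heq : ∀ j (h1 : j < xs.length) (h2 : j < ys.length), j < i → xs[j] = ys[j])
    (hlt : xs[i] < ys[i]) : lexLt xs ys := by
  induction xs generalizing ys i with
  | nil => simp at hix
  | cons a xs ih =>
    cases ys with
    | nil => simp at hiy
    | cons b ys =>
      cases i with
      | zero => exact List.Lex.rel (by simpa using hlt)
      | succ i =>
        have hab : a = b := heq 0 (by simp) (by simp) (Nat.succ_pos i)
        subst hab
        refine List.Lex.cons (ih (by simpa using hix) (by simpa using hiy)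
          (fun j hj1 hj2 hji => ?_) (by simpa using hlt))
        have := heq (j+1) (by simpa using hj1) (by simpa using hj2) (by omega)
        simpa using this

lemma getElem_of_lexLt {xs ys : List ℝ} (h : lexLt xs ys) (hlen : xs.length = ys.length) :
    ∃ i, ∃ (h1 : i < xs.length) (h2 : i < ys.length),
      (∀ j (hj1 : j < xs.length) (hj2 : j < ys.length), j < i → xs[j] = ys[j]) ∧ xs[i] < ys[i] := by
  induction xs generalizing ys with
  | nil =>
    cases ys with
    | nil => cases h
    | cons b ys => simp at hlen
  | cons a xs ih =>
    cases ys with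
    | nil => cases h
    | cons b ys =>
      cases h with
      | rel hab =>
        exact ⟨0, by simp, by simp, fun j _ _ hj => absurd hj (Nat.not_lt_zero j), by simpa using hab⟩
      | cons h' =>
        obtain ⟨i, h1, h2, heq, hlt⟩ := ih h' (by simpa using hlen)
        refine ⟨i+1, by simpa using h1, by simpa using h2, fun j hj1 hj2 hji => ?_, by simpa using hlt⟩
        cases j with
        | zero => simp
        | succ j =>
          have := heq j (by simpa using hj1) (by simpa using hj2) (by omega)
          simpa using this

lemma lexLt_asymm : ∀ {xs ys : List ℝ}, lexLt xs ys → lexLt ys xs → False := by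
  intro xs
  induction xs with
  | nil => intro ys h1 h2; cases ys <;> cases h1 <;> cases h2
  | cons a xs ih =>
    intro ys h1 h2
    cases ys with
    | nil => cases h1
    | cons b ys =>
      cases h1 with
      | rel hab => cases h2 with
        | rel hba => exact absurd hab (not_lt.mpr hba.le)
        | cons h2' => exact lt_irrefl _ hab
      | cons h1' => cases h2 with
        | rel hba => exact lt_irrefl _ hba
        | cons h2' => exact ih h1' h2'

lemma lexLt_irrefl (xs : List ℝ) : ¬ lexLt xs xs := fun h => lexLt_asymm h h

lemma lexLt_cons_same {a : ℝ} {xs ys : List ℝ} : lexLt (a::xs) (a::ys) ↔ lexLt xs ys := by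
  constructor
  · intro h
    cases h with
    | rel hab => exact absurd hab (lt_irrefl a)
    | cons h' => exact h'
  · exact List.Lex.cons



/-! ### gapSeq / dists transfer -/

def gapOf (l : List ℝ) : List ℝ := List.zipWith (fun a b => a - b) (l.tail ++ [2 * π]) l

lemma gapSeq_eq_gapOf (S : Finset Real.Angle) (p : Real.Angle) :
    gapSeq S p = gapOf (dists S p) := rfl

lemma gapOf_cons_cons (a x : ℝ) (l : List ℝ) :
    gapOf (a :: x :: l) = (x - a) :: gapOf (x :: l) := rfl

lemma gapOf_single (a : ℝ) : gapOf [a] = [2 * π - a] := rfl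

lemma lexLt_cons_iff {u v : ℝ} {us vs : List ℝ} :
    lexLt (u::us) (v::vs) ↔ u < v ∨ (u = v ∧ lexLt us vs) := by
  constructor
  · intro h
    cases h with
    | rel h => exact Or.inl h
    | cons h => exact Or.inr ⟨rfl, h⟩
  · rintro (h | ⟨rfl, h⟩)
    exacts [List.Lex.rel h, List.Lex.cons h]

lemma gap_transfer : ∀ {xs ys : List ℝ} (a : ℝ), xs.length = ys.length →
    (lexLt (gapOf (a::xs)) (gapOf (a::ys)) ↔ lexLt xs ys) := by
  intro xs
  induction xs with
  | nil =>
    intro ys a hlen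
    cases ys with
    | nil => simp [gapOf_single, lexLt]
    | cons b ys => simp at hlen
  | cons x xs ih =>
    intro ys a hlen
    cases ys with
    | nil => simp at hlen
    | cons y ys =>
      rw [gapOf_cons_cons, gapOf_cons_cons, lexLt_cons_iff, lexLt_cons_iff]
      have hxy : x - a < y - a ↔ x < y := by constructor <;> intro <;> linarith
      have hxy2 : x - a = y - a ↔ x = y := by constructor <;> intro <;> linarith
      rw [hxy, hxy2]
      constructor
      · rintro (h | ⟨rfl, h⟩)
        · exact Or.inl h
        · exact Or.inr ⟨rfl, (ih x (by simpa using hlen)).mp h⟩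
      · rintro (h | ⟨rfl, h⟩)
        · exact Or.inl h
        · exact Or.inr ⟨rfl, (ih x (by simpa using hlen)).mpr h⟩

/-! ### dists basics -/

lemma mem_dists {T : Finset Real.Angle} {p : Real.Angle} {x : ℝ} :
    x ∈ dists T p ↔ ∃ q ∈ T, cw p q = x := by
  simp [dists, Finset.mem_sort]

lemma dists_sorted (T : Finset Real.Angle) (p : Real.Angle) :
    List.Pairwise (· ≤ ·) (dists T p) := Finset.pairwise_sort _ _

lemma dists_nodup (T : Finset Real.Angle) (p : Real.Angle) :
    (dists T p).Nodup := Finset.sort_nodup _ _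

lemma dists_strictSorted (T : Finset Real.Angle) (p : Real.Angle) :
    List.Pairwise (· < ·) (dists T p) := by
  have h1 := dists_sorted T p
  have h2 := dists_nodup T p
  exact List.Pairwise.imp₂ (fun a b hle hne => lt_of_le_of_ne hle hne) h1 h2

lemma dists_length (T : Finset Real.Angle) (p : Real.Angle) :
    (dists T p).length = T.card := by
  rw [dists, Finset.length_sort, Finset.card_image_of_injective _ (cw_inj p)]

lemma dists_nonneg {T : Finset Real.Angle} {p : Real.Angle} {x : ℝ} (h : x ∈ dists T p) : 0 ≤ x := by
  obtain ⟨q, _, rfl⟩ := mem_dists.mp h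
  exact cw_nonneg p q

lemma dists_lt_two_pi {T : Finset Real.Angle} {p : Real.Angle} {x : ℝ} (h : x ∈ dists T p) :
    x < 2 * π := by
  obtain ⟨q, _, rfl⟩ := mem_dists.mp h
  exact cw_lt_two_pi p q

lemma dists_head (T : Finset Real.Angle) (p : Real.Angle) (hp : p ∈ T) :
    ∃ l, dists T p = 0 :: l := by
  have h0 : (0:ℝ) ∈ dists T p := mem_dists.mpr ⟨p, hp, cw_self p⟩
  cases hd : dists T p with
  | nil => rw [hd] at h0; simp at h0
  | cons a l =>
    rw [hd] at h0
    have hs := dists_sorted T p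
    rw [hd] at hs
    have ha0 : 0 ≤ a := by
      have : a ∈ dists T p := by rw [hd]; simp
      exact dists_nonneg this
    have ha0' : a ≤ 0 := by
      rcases List.mem_cons.mp h0 with h | h
      · exact h.ge
      · exact (List.pairwise_cons.mp hs).1 0 h
    exact ⟨l, by rw [le_antisymm ha0' ha0]⟩

lemma dists_transfer {T : Finset Real.Angle} {p q : Real.Angle} (hp : p ∈ T) (hq : q ∈ T) :
    lexLt (gapSeq T p) (gapSeq T q) ↔ lexLt (dists T p) (dists T q) := by
  obtain ⟨lp, hlp⟩ := dists_head T p hp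
  obtain ⟨lq, hlq⟩ := dists_head T q hq
  have hlen : lp.length = lq.length := by
    have h1 := dists_length T p
    have h2 := dists_length T q
    rw [hlp] at h1; rw [hlq] at h2
    simp at h1 h2; omega
  rw [gapSeq_eq_gapOf, gapSeq_eq_gapOf, hlp, hlq, gap_transfer 0 hlen, lexLt_cons_iff]
  simp



/-! ### rotation of distance lists -/

noncomputable def rotl (d : ℝ) (l : List ℝ) : List ℝ :=
  (l.filter (fun v => decide (d ≤ v))).map (fun v => v - d) ++
  (l.filter (fun v => !decide (d ≤ v))).map (fun v => v + (2 * π - d))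

noncomputable def psi (d : ℝ) (v : ℝ) : ℝ := if d ≤ v then v - d else v + (2 * π - d)

lemma rotl_perm (d : ℝ) (l : List ℝ) : (rotl d l).Perm (l.map (psi d)) := by
  have h := List.filter_append_perm (fun v => decide (d ≤ v)) l
  have h2 := (h.map (psi d)).symm
  rw [List.map_append] at h2
  have e1 : (l.filter (fun v => decide (d ≤ v))).map (psi d)
      = (l.filter (fun v => decide (d ≤ v))).map (fun v => v - d) := by
    apply List.map_congr_left
    intro v hv
    have := List.of_mem_filter hv
    simp at this
    simp [psi, this]
  have e2 : (l.filter (fun v => !decide (d ≤ v))).map (psi d)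
      = (l.filter (fun v => !decide (d ≤ v))).map (fun v => v + (2 * π - d)) := by
    apply List.map_congr_left
    intro v hv
    have := List.of_mem_filter hv
    simp at this
    simp [psi, this, not_le.mpr this]
  rw [e1, e2] at h2
  exact h2.symm

lemma rotl_sorted {d : ℝ} {l : List ℝ} (hs : List.Pairwise (· ≤ ·) l)
    (hb : ∀ v ∈ l, 0 ≤ v ∧ v < 2 * π) :
    List.Pairwise (· ≤ ·) (rotl d l) := by
  rw [rotl, List.pairwise_append]
  refine ⟨?_, ?_, ?_⟩
  · exact List.Pairwise.map _ (fun a b hab => sub_le_sub_right hab d) (hs.filter _)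
  · exact List.Pairwise.map _ (fun a b hab => add_le_add_left hab _) (hs.filter _)
  · intro x hx y hy
    simp only [List.mem_map, List.mem_filter] at hx hy
    obtain ⟨v, ⟨hvl, hvd⟩, rfl⟩ := hx
    obtain ⟨w, ⟨hwl, hwd⟩, rfl⟩ := hy
    have hv2 := (hb v hvl).2
    have hw0 := (hb w hwl).1
    linarith

lemma psi_injOn {d : ℝ} : ∀ v, (0 ≤ v ∧ v < 2*π) → ∀ w, (0 ≤ w ∧ w < 2*π) →
    psi d v = psi d w → v = w := by
  intro v hv w hw h
  unfold psi at h
  split at h <;> split at h <;> linarith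

lemma dists_rotl (T : Finset Real.Angle) (p q : Real.Angle) :
    dists T q = rotl (cw p q) (dists T p) := by
  set d := cw p q with hd
  have hpsi : ∀ x : Real.Angle, cw q x = psi d (cw p x) := by
    intro x
    rw [cw_rot p q x, psi]
    split <;> ring
  have himg : T.image (cw q) = (T.image (cw p)).image (psi d) := by
    rw [Finset.image_image]
    apply Finset.image_congr
    intro x _
    exact hpsi x
  have hX : ((dists T p : List ℝ) : Multiset ℝ) = (T.image (cw p)).val := Finset.sort_eq _ _
  have hq : ((dists T q : List ℝ) : Multiset ℝ) = (T.image (cw q)).val := Finset.sort_eq _ _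
  have hval : (T.image (cw q)).val = Multiset.map (psi d) (T.image (cw p)).val := by
    rw [himg]
    apply Finset.image_val_of_injOn
    intro v hv w hw h
    have hv' : v ∈ dists T p := by
      rw [dists, Finset.mem_sort]; exact_mod_cast hv
    have hw' : w ∈ dists T p := by
      rw [dists, Finset.mem_sort]; exact_mod_cast hw
    exact psi_injOn v ⟨dists_nonneg hv', dists_lt_two_pi hv'⟩ w
      ⟨dists_nonneg hw', dists_lt_two_pi hw'⟩ h
  have hcoe : (((dists T p).map (psi d) : List ℝ) : Multiset ℝ) = ((dists T q : List ℝ) : Multiset ℝ) := by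
    rw [← Multiset.map_coe, hX, hq, hval]
  have hperm : (rotl d (dists T p)).Perm (dists T q) :=
    (rotl_perm d (dists T p)).trans (Multiset.coe_eq_coe.mp hcoe)
  exact (List.Perm.eq_of_pairwise'
    (rotl_sorted (dists_sorted T p) (fun v hv => ⟨dists_nonneg hv, dists_lt_two_pi hv⟩))
    (dists_sorted T q) hperm).symm

lemma dists_erase (T : Finset Real.Angle) (p a : Real.Angle) :
    dists (T.erase a) p = (dists T p).erase (cw p a) := by
  have himg : (T.erase a).image (cw p) = (T.image (cw p)).erase (cw p a) :=
    Finset.image_erase (cw_inj p) T a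
  rw [dists, himg]
  refine List.Perm.eq_of_pairwise' (Finset.pairwise_sort _ _)
    ((dists_sorted T p).sublist List.erase_sublist) ?_
  rw [← Multiset.coe_eq_coe, Finset.sort_eq, ← Multiset.coe_erase, dists, Finset.sort_eq,
    Finset.erase_val]



/-! ### getElem formulas for rotl -/

lemma sorted_getElem_lt {l : List ℝ} (h : List.Pairwise (· < ·) l) {i j : ℕ}
    (hij : i < j) (hj : j < l.length) : l[i]'(lt_trans hij hj) < l[j] := by
  exact List.pairwise_iff_getElem.mp h i j (lt_trans hij hj) hj hij

lemma filter_ge_eq_drop {l : List ℝ} (h : List.Pairwise (· < ·) l) {k : ℕ} (hk : k < l.length)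
    {d : ℝ} (hd : l[k] = d) :
    l.filter (fun v => decide (d ≤ v)) = l.drop k := by
  have h1 : (l.take k).filter (fun v => decide (d ≤ v)) = [] := by
    rw [List.filter_eq_nil_iff]
    intro a ha
    obtain ⟨n, hn, rfl⟩ := List.mem_iff_getElem.mp ha
    rw [List.getElem_take]
    have hnk : n < k := by
      have := hn; simp [List.length_take] at this; omega
    simp only [decide_eq_true_eq, not_le]
    rw [← hd]
    exact sorted_getElem_lt h hnk hk
  have h2 : (l.drop k).filter (fun v => decide (d ≤ v)) = l.drop k := by
    rw [List.filter_eq_self]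
    intro a ha
    obtain ⟨n, hn, rfl⟩ := List.mem_iff_getElem.mp ha
    rw [List.getElem_drop]
    simp only [decide_eq_true_eq]
    rw [← hd]
    rcases Nat.eq_zero_or_pos n with rfl | hn0
    · simp
    · have hkn : k < k + n := by omega
      have := sorted_getElem_lt h hkn (by have := hn; simp [List.length_drop] at this; omega)
      linarith
  conv_lhs => rw [← List.take_append_drop k l, List.filter_append]
  rw [h1, h2, List.nil_append]

lemma filter_lt_eq_take {l : List ℝ} (h : List.Pairwise (· < ·) l) {k : ℕ} (hk : k < l.length)
    {d : ℝ} (hd : l[k] = d) :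
    l.filter (fun v => !decide (d ≤ v)) = l.take k := by
  have h1 : (l.take k).filter (fun v => !decide (d ≤ v)) = l.take k := by
    rw [List.filter_eq_self]
    intro a ha
    obtain ⟨n, hn, rfl⟩ := List.mem_iff_getElem.mp ha
    rw [List.getElem_take]
    have hnk : n < k := by
      have := hn; simp [List.length_take] at this; omega
    simp only [Bool.not_eq_true', decide_eq_false_iff_not, not_le]
    rw [← hd]
    exact sorted_getElem_lt h hnk hk
  have h2 : (l.drop k).filter (fun v => !decide (d ≤ v)) = [] := by
    rw [List.filter_eq_nil_iff]
    intro a ha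
    obtain ⟨n, hn, rfl⟩ := List.mem_iff_getElem.mp ha
    rw [List.getElem_drop]
    simp only [Bool.not_eq_true', decide_eq_false_iff_not, not_not, not_le]
    rw [← hd]
    rcases Nat.eq_zero_or_pos n with rfl | hn0
    · simp
    · have hkn : k < k + n := by omega
      have := sorted_getElem_lt h hkn (by have := hn; simp [List.length_drop] at this; omega)
      simp only [not_lt]
      linarith
  conv_lhs => rw [← List.take_append_drop k l, List.filter_append]
  rw [h1, h2, List.append_nil]

lemma rotl_eq_drop_take {l : List ℝ} (h : List.Pairwise (· < ·) l) {k : ℕ} (hk : k < l.length)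
    {d : ℝ} (hd : l[k] = d) :
    rotl d l = (l.drop k).map (fun v => v - d) ++ (l.take k).map (fun v => v + (2*π - d)) := by
  rw [rotl, filter_ge_eq_drop h hk hd, filter_lt_eq_take h hk hd]

lemma rotl_length {l : List ℝ} (h : List.Pairwise (· < ·) l) {k : ℕ} (hk : k < l.length)
    {d : ℝ} (hd : l[k] = d) :
    (rotl d l).length = l.length := by
  rw [rotl_eq_drop_take h hk hd]
  simp [List.length_take, List.length_drop]
  omega

lemma rotl_getElem_lo {l : List ℝ} (h : List.Pairwise (· < ·) l) {k i : ℕ} (hk : k < l.length)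
    {d : ℝ} (hd : l[k] = d) (hi : i < l.length - k) :
    (rotl d l)[i]'(by rw [rotl_length h hk hd]; omega) = l[k+i]'(by omega) - d := by
  rw [List.getElem_of_eq (rotl_eq_drop_take h hk hd)]
  rw [List.getElem_append]
  have hlen : ((l.drop k).map (fun v => v - d)).length = l.length - k := by
    simp [List.length_drop]
  rw [dif_pos (by rw [hlen]; exact hi)]
  rw [List.getElem_map, List.getElem_drop]

lemma rotl_getElem_hi {l : List ℝ} (h : List.Pairwise (· < ·) l) {k i : ℕ} (hk : k < l.length)
    {d : ℝ} (hd : l[k] = d) (hi1 : l.length - k ≤ i) (hi2 : i < l.length) :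
    (rotl d l)[i]'(by rw [rotl_length h hk hd]; omega) = l[i - (l.length - k)]'(by omega) + (2*π - d) := by
  rw [List.getElem_of_eq (rotl_eq_drop_take h hk hd)]
  rw [List.getElem_append]
  have hlen : ((l.drop k).map (fun v => v - d)).length = l.length - k := by
    simp [List.length_drop]
  rw [dif_neg (by rw [hlen]; omega)]
  simp only [hlen]
  rw [List.getElem_map, List.getElem_take]



/-! ### main abstract lemma -/

set_option maxHeartbeats 1600000 in
lemma main_abstract {ds : List ℝ}
    (hsort : List.Pairwise (· < ·) ds)
    (hub : ∀ v ∈ ds, v < 2 * π)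
    (ds0 : ∀ (h : 0 < ds.length), ds[0] = 0)
    {m : ℕ} (hm : m < ds.length) (hm0 : 0 < m) (hdsm : ds[m] = π)
    (MIN : ∀ (k : ℕ) (hk : k < ds.length), 0 < k → lexLt ds (rotl (ds[k]) ds))
    {k : ℕ} (hk : k < ds.length) (hk0 : 0 < k) (hkm : k ≠ m)
    (BAD : lexLt ((rotl (ds[k]) ds).eraseIdx (if k < m then m - k else m + (ds.length - k)))
      (ds.eraseIdx m)) :
    False := by
  have hds0 : ds[0]'(by omega) = 0 := ds0 (by omega)
  have hlt : ∀ (i j : ℕ) (hj : j < ds.length) (_hij : i < j), ds[i]'(by omega) < ds[j] :=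
    fun i j hj hij => sorted_getElem_lt hsort hij hj
  have hu : ∀ (i : ℕ) (hi : i < ds.length), ds[i] < 2 * π :=
    fun i hi => hub _ (List.getElem_mem hi)
  have hRkl : (rotl (ds[k]) ds).length = ds.length := rotl_length hsort hk rfl
  set posk := if k < m then m - k else m + (ds.length - k) with hposk
  have hposkN : posk < ds.length := by
    rw [hposk]; split <;> omega
  have hTkl : ((rotl (ds[k]) ds).eraseIdx posk).length = ds.length - 1 := by
    rw [List.length_eraseIdx]
    rw [hRkl]
    simp [hposkN]
  have hT0l : (ds.eraseIdx m).length = ds.length - 1 := by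
    rw [List.length_eraseIdx]
    simp [hm]
  obtain ⟨d, hd1, hd2, heq, hdlt⟩ := getElem_of_lexLt BAD (by omega)
  rw [hTkl] at hd1
  -- entry formulas
  have hT0get : ∀ (j : ℕ) (hj : j < ds.length - 1),
      (ds.eraseIdx m)[j]'(by omega) = if j < m then ds[j]'(by omega) else ds[j+1]'(by omega) := by
    intro j hj
    rw [List.getElem_eraseIdx]
    split
    · rfl
    · rfl
  have hTkget : ∀ (j : ℕ) (hj : j < ds.length - 1),
      ((rotl (ds[k]) ds).eraseIdx posk)[j]'(by omega)
        = if h' : j < posk then (rotl (ds[k]) ds)[j]'(by omega) else (rotl (ds[k]) ds)[j+1]'(by omega) := by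
    intro j hj
    rw [List.getElem_eraseIdx]
  rcases Nat.lt_or_ge k m with hkltm | hkgem
  · -- CASE I : k < m
    have hpk : posk = m - k := by rw [hposk, if_pos hkltm]
    have hcommon : ∀ (j : ℕ) (_hj : j < m - k) (_hjd : j < d),
        (rotl (ds[k]) ds)[j]'(by omega) = ds[j]'(by omega) := by
      intro j hj hjd
      have h1 := heq j (by omega) (by omega) hjd
      have e1 : ((rotl (ds[k]) ds).eraseIdx posk)[j]'(by omega) = (rotl (ds[k]) ds)[j]'(by omega) := by
        rw [hTkget j (by omega), dif_pos (by omega)]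
      have e2 : (ds.eraseIdx m)[j]'(by omega) = ds[j]'(by omega) := by
        rw [hT0get j (by omega), if_pos (by omega)]
      rw [e1, e2] at h1
      exact h1
    refine lexLt_asymm ?_ (MIN k hk hk0)
    rcases Nat.lt_or_ge d (m - k) with hdm | hdm
    · -- d < m - k
      refine lexLt_of_getElem (i := d) (by omega) (by omega)
        (fun j hj1 hj2 hjd => hcommon j (by omega) hjd) ?_
      have e1 : ((rotl (ds[k]) ds).eraseIdx posk)[d]'(by omega) = (rotl (ds[k]) ds)[d]'(by omega) := by
        rw [hTkget d (by omega), dif_pos (by omega)]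
      have e2 : (ds.eraseIdx m)[d]'(by omega) = ds[d]'(by omega) := by
        rw [hT0get d (by omega), if_pos (by omega)]
      rw [e1, e2] at hdlt
      exact hdlt
    · -- d ≥ m - k
      have hmkN : m - k < ds.length - 1 := by omega
      have hle : ((rotl (ds[k]) ds).eraseIdx posk)[m-k]'(by omega) ≤ (ds.eraseIdx m)[m-k]'(by omega) := by
        rcases Nat.eq_or_lt_of_le hdm with hcase | hcase
        · subst hcase
          exact le_of_lt hdlt
        · exact le_of_eq (heq (m-k) (by omega) (by omega) hcase)
      have eTk : ((rotl (ds[k]) ds).eraseIdx posk)[m-k]'(by omega)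
          = (rotl (ds[k]) ds)[m-k+1]'(by omega) := by
        rw [hTkget (m-k) hmkN, dif_neg (by omega)]
      have eT0 : (ds.eraseIdx m)[m-k]'(by omega) = ds[m-k]'(by omega) := by
        rw [hT0get (m-k) hmkN, if_pos (by omega)]
      rw [eTk, eT0] at hle
      have hRmk : (rotl (ds[k]) ds)[m-k]'(by omega) = π - ds[k] := by
        have := rotl_getElem_lo hsort hk rfl (i := m - k) (by omega)
        rw [this]
        have hidx : k + (m - k) = m := by omega
        simp only [hidx, hdsm]
      have hkey : π - ds[k] < ds[m-k]'(by omega) := by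
        rcases Nat.lt_or_ge (m+1) ds.length with hm1 | hm1
        · have : (rotl (ds[k]) ds)[m-k+1]'(by omega) = ds[m+1]'(by omega) - ds[k] := by
            have := rotl_getElem_lo hsort hk rfl (i := m - k + 1) (by omega)
            rw [this]
            have hidx : k + (m - k + 1) = m + 1 := by omega
            simp only [hidx]
          rw [this] at hle
          have h2 : ds[m] < ds[m+1]'(by omega) := hlt m (m+1) (by omega) (by omega)
          rw [hdsm] at h2
          linarith
        · have hm1' : m + 1 = ds.length := by omega
          have : (rotl (ds[k]) ds)[m-k+1]'(by omega) = ds[0]'(by omega) + (2*π - ds[k]) := by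
            have := rotl_getElem_hi hsort hk rfl (i := m - k + 1) (by omega) (by omega)
            rw [this]
            have hidx : m - k + 1 - (ds.length - k) = 0 := by omega
            simp only [hidx]
          rw [this, hds0] at hle
          have := Real.pi_pos
          linarith
      refine lexLt_of_getElem (i := m - k) (by omega) (by omega)
        (fun j hj1 hj2 hjd => hcommon j hjd (by omega)) ?_
      rw [hRmk]
      exact hkey
  · -- CASE II : m < k
    have hmk : m < k := by omega
    have hpk : posk = m + (ds.length - k) := by rw [hposk, if_neg (by omega)]
    rcases Nat.lt_or_ge d m with hdm | hdm
    · -- d < m : direct contradiction with MIN k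
      refine lexLt_asymm ?_ (MIN k hk hk0)
      refine lexLt_of_getElem (i := d) (by omega) (by omega) (fun j hj1 hj2 hjd => ?_) ?_
      · have h1 := heq j (by omega) (by omega) hjd
        have e1 : ((rotl (ds[k]) ds).eraseIdx posk)[j]'(by omega) = (rotl (ds[k]) ds)[j]'(by omega) := by
          rw [hTkget j (by omega), dif_pos (by omega)]
        have e2 : (ds.eraseIdx m)[j]'(by omega) = ds[j]'(by omega) := by
          rw [hT0get j (by omega), if_pos (by omega)]
        rw [e1, e2] at h1
        exact h1
      · have e1 : ((rotl (ds[k]) ds).eraseIdx posk)[d]'(by omega) = (rotl (ds[k]) ds)[d]'(by omega) := by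
          rw [hTkget d (by omega), dif_pos (by omega)]
        have e2 : (ds.eraseIdx m)[d]'(by omega) = ds[d]'(by omega) := by
          rw [hT0get d (by omega), if_pos (by omega)]
        rw [e1, e2] at hdlt
        exact hdlt
    · -- d ≥ m
      have XEQ : ∀ (j : ℕ) (hj : j < m), (rotl (ds[k]) ds)[j]'(by omega) = ds[j]'(by omega) := by
        intro j hj
        have h1 := heq j (by omega) (by omega) (by omega)
        have e1 : ((rotl (ds[k]) ds).eraseIdx posk)[j]'(by omega) = (rotl (ds[k]) ds)[j]'(by omega) := by
          rw [hTkget j (by omega), dif_pos (by omega)]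
        have e2 : (ds.eraseIdx m)[j]'(by omega) = ds[j]'(by omega) := by
          rw [hT0get j (by omega), if_pos (by omega)]
        rw [e1, e2] at h1
        exact h1
      obtain ⟨D1, hD1a, hD1b, heq1, hlt1⟩ := getElem_of_lexLt (MIN k hk hk0) (by omega)
      rw [hRkl] at hD1b
      have hge : ds[m] ≤ (rotl (ds[k]) ds)[m]'(by omega) := by
        rcases Nat.lt_trichotomy D1 m with h | h | h
        · have := XEQ D1 (by omega)
          rw [this] at hlt1
          exact absurd hlt1 (lt_irrefl _)
        · subst h
          exact le_of_lt hlt1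
        · exact le_of_eq (heq1 m (by omega) (by omega) h)
      have hpik : π < ds[k] := by
        have := hlt m k hk hmk
        rwa [hdsm] at this
      rcases Nat.lt_or_ge m (ds.length - k) with hmt | htm
      · -- m < t : range contradiction
        have hRkm : (rotl (ds[k]) ds)[m]'(by omega) = ds[k+m]'(by omega) - ds[k] :=
          rotl_getElem_lo hsort hk rfl (by omega)
        have h2 : ds[k+m]'(by omega) < 2 * π := hu (k+m) (by omega)
        rw [hRkm, hdsm] at hge
        linarith
      · rcases Nat.eq_or_lt_of_le htm with hteq | htlt
        · -- m = t
          have hRkm : (rotl (ds[k]) ds)[m]'(by omega) = ds[m - (ds.length - k)]'(by omega) + (2*π - ds[k]) :=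
            rotl_getElem_hi hsort hk rfl (by omega) (by omega)
          have hidx : m - (ds.length - k) = 0 := by omega
          simp only [hidx, hds0] at hRkm
          rw [hRkm, hdsm] at hge
          linarith
        · -- t < m : border case
          have hbord : ∀ (j : ℕ) (_hj : j < ds.length - k),
              ds[k+j]'(by omega) = ds[j]'(by omega) + ds[k] := by
            intro j hj
            have h1 := XEQ j (by omega)
            rw [rotl_getElem_lo hsort hk rfl (by omega)] at h1
            linarith
          have h2pi : 2*π - ds[k] = ds[ds.length - k]'(by omega) := by
            have h1 := XEQ (ds.length - k) (by omega)
            rw [rotl_getElem_hi hsort hk rfl (by omega) (by omega)] at h1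
            have hidx : ds.length - k - (ds.length - k) = 0 := by omega
            simp only [hidx, hds0] at h1
            linarith
          have hRk_hi : ∀ (i : ℕ) (hi : i < ds.length) (_hit : ds.length - k ≤ i),
              (rotl (ds[k]) ds)[i]'(by omega)
                = ds[i-(ds.length - k)]'(by omega) + ds[ds.length - k]'(by omega) := by
            intro i hi hit
            rw [rotl_getElem_hi hsort hk rfl (by omega) (by omega), h2pi]
          have hD1t : ds.length - k < D1 := by
            rcases Nat.lt_trichotomy D1 (ds.length - k) with h | h | h
            · have := XEQ D1 (by omega)
              rw [this] at hlt1
              exact absurd hlt1 (lt_irrefl _)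
            · subst h
              have hthis := hRk_hi (ds.length - k) (by omega) (by omega)
              rw [hthis] at hlt1
              have hidx : ds.length - k - (ds.length - k) = 0 := by omega
              simp only [hidx, hds0, zero_add] at hlt1
              exact absurd hlt1 (lt_irrefl _)
            · exact h
          have EQ1 : ∀ (j : ℕ) (_hj1 : ds.length - k ≤ j) (_hj2 : j < D1),
              ds[j]'(by omega) = ds[j-(ds.length - k)]'(by omega) + ds[ds.length - k]'(by omega) := by
            intro j hj1 hj2
            have h1 := heq1 j (by omega) (by omega) hj2
            rw [hRk_hi j (by omega) hj1] at h1
            exact h1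
          have LT1 : ds[D1] < ds[D1-(ds.length - k)]'(by omega) + ds[ds.length - k]'(by omega) := by
            have h1 := hlt1
            rw [hRk_hi D1 (by omega) (by omega)] at h1
            exact h1
          have ht0 : 0 < ds.length - k := by omega
          have htN : ds.length - k < ds.length := by omega
          obtain ⟨D2, hD2a, hD2b, heq2, hlt2⟩ := getElem_of_lexLt (MIN (ds.length - k) htN ht0)
            (by rw [rotl_length hsort htN rfl])
          have hNt : ds.length - (ds.length - k) = k := by omega
          rcases Nat.lt_or_ge D2 k with hD2k | hD2k
          · have LT2 : ds[D2]'(by omega) < ds[(ds.length - k)+D2]'(by omega) - ds[ds.length - k]'(by omega) := by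
              have h1 := hlt2
              rw [rotl_getElem_lo hsort htN rfl (by omega)] at h1
              exact h1
            have EQ2 : ∀ (j : ℕ) (_hj : j < D2),
                ds[j]'(by omega) = ds[(ds.length - k)+j]'(by omega) - ds[ds.length - k]'(by omega) := by
              intro j hj
              have h1 := heq2 j (by omega) (by omega) hj
              rw [rotl_getElem_lo hsort htN rfl (by omega)] at h1
              exact h1
            rcases Nat.lt_trichotomy D1 ((ds.length - k) + D2) with h | h | h
            · have h1 := EQ2 (D1 - (ds.length - k)) (by omega)
              have hidx : (ds.length - k) + (D1 - (ds.length - k)) = D1 := by omega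
              simp only [hidx] at h1
              linarith
            · subst h
              have hidx : (ds.length - k) + D2 - (ds.length - k) = D2 := by omega
              simp only [hidx] at LT1
              linarith
            · have h1 := EQ1 ((ds.length - k) + D2) (by omega) h
              have hidx : (ds.length - k) + D2 - (ds.length - k) = D2 := by omega
              simp only [hidx] at h1
              linarith
          · -- D2 ≥ k : full equality
            have hall : ∀ (i : ℕ) (h1 : i < ds.length)
                (h2 : i < (rotl (ds[ds.length - k]'htN) ds).length),
                ds[i] = (rotl (ds[ds.length - k]'htN) ds)[i] := by
              intro i hi h2
              rcases Nat.lt_or_ge i k with hik | hik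
              · exact heq2 i (by omega) (by omega) (by omega)
              · rw [rotl_getElem_hi hsort htN rfl (by omega) (by omega)]
                simp only [hNt]
                have hrw : 2*π - ds[ds.length - k]'htN = ds[k] := by linarith [h2pi]
                rw [hrw]
                have h1 := hbord (i - k) (by omega)
                have hidx : k + (i - k) = i := by omega
                simp only [hidx] at h1
                exact h1
            have heqlist : ds = rotl (ds[ds.length - k]'htN) ds :=
              List.ext_getElem (by rw [rotl_length hsort htN rfl]) hall
            have h1 := MIN (ds.length - k) htN ht0
            rw [← heqlist] at h1
            exact lexLt_irrefl ds h1



/-! ### glue -/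

lemma leader_not_two {S : Finset Real.Angle} {L r : Real.Angle} (hL : TrueLeader S L)
    (hr : r ∈ S) (hrL : r ≠ L) : ¬ TrueLeader S r := by
  intro h
  exact lexLt_asymm (hL.2 r hr hrL) (h.2 L hL.1 (Ne.symm hrL))

lemma core {S : Finset Real.Angle} {r L : Real.Angle} (hr : r ∈ S) (ha : antipode r ∉ S)
    (hld : TrueLeader (C1 S r) r) (hL : TrueLeader S L) (hrL : r ≠ L) : False := by
  have hld' : TrueLeader (insert (antipode r) S) r := hld
  set T : Finset Real.Angle := insert (antipode r) S with hT
  have hrT : r ∈ T := Finset.mem_insert_of_mem hr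
  have haT : antipode r ∈ T := Finset.mem_insert_self _ S
  have hS : T.erase (antipode r) = S := Finset.erase_insert ha
  set ds := dists T r with hds
  have hsort : List.Pairwise (· < ·) ds := dists_strictSorted T r
  have hub : ∀ v ∈ ds, v < 2*π := fun v hv => dists_lt_two_pi hv
  have hN0 : 0 < ds.length := by
    rw [hds, dists_length]
    exact Finset.card_pos.mpr ⟨r, hrT⟩
  have ds0 : ∀ (_h : 0 < ds.length), ds[0]'(by omega) = 0 := by
    intro h
    obtain ⟨l, hl⟩ := dists_head T r hrT
    rw [List.getElem_of_eq (hds.trans hl)]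
    simp
  have hπ : π ∈ ds := mem_dists.mpr ⟨antipode r, haT, cw_antipode r⟩
  obtain ⟨m, hm, hdsm⟩ := List.mem_iff_getElem.mp hπ
  have hm0 : 0 < m := by
    rcases Nat.eq_zero_or_pos m with h0 | h0
    · subst h0
      rw [ds0 hN0] at hdsm
      exact absurd hdsm.symm (ne_of_gt Real.pi_pos)
    · exact h0
  have MIN : ∀ (j : ℕ) (hj : j < ds.length), 0 < j → lexLt ds (rotl (ds[j]) ds) := by
    intro j hj hj0
    have hmem : ds[j] ∈ ds := List.getElem_mem hj
    obtain ⟨q, hqT, hcw⟩ := mem_dists.mp hmem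
    have hqr : q ≠ r := by
      intro h
      subst h
      rw [cw_self] at hcw
      have h2 : ds[0]'(by omega) < ds[j] := sorted_getElem_lt hsort hj0 hj
      rw [ds0 hN0, ← hcw] at h2
      exact absurd h2 (lt_irrefl _)
    have h1 := hld'.2 q hqT hqr
    rw [dists_transfer hrT hqT] at h1
    rw [dists_rotl T r q, hcw] at h1
    exact h1
  have hLT : L ∈ T := Finset.mem_insert_of_mem hL.1
  have hLds : cw r L ∈ ds := mem_dists.mpr ⟨L, hLT, rfl⟩
  obtain ⟨k, hk, hdsk⟩ := List.mem_iff_getElem.mp hLds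
  have hk0 : 0 < k := by
    rcases Nat.eq_zero_or_pos k with h0 | h0
    · subst h0
      rw [ds0 hN0] at hdsk
      have : L = r := cw_inj r (by rw [← hdsk, cw_self])
      exact absurd this.symm hrL
    · exact h0
  have hkm : k ≠ m := by
    intro h
    subst h
    rw [hdsm] at hdsk
    have : L = antipode r := cw_inj r (by rw [← hdsk, cw_antipode])
    rw [this] at hL
    exact ha (hL.1)
  have hbad0 : lexLt (dists S L) (dists S r) := by
    have h1 := hL.2 r hr hrL
    rwa [dists_transfer hL.1 hr] at h1
  have hdsr : dists S r = ds.eraseIdx m := by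
    rw [← hS, dists_erase, cw_antipode, ← hdsm]
    exact List.Nodup.erase_getElem (dists_nodup T r) m hm
  have hposkN : (if k < m then m - k else m + (ds.length - k)) < ds.length := by
    split <;> omega
  have hdsL : dists S L
      = (rotl (ds[k]) ds).eraseIdx (if k < m then m - k else m + (ds.length - k)) := by
    have hnodup : (rotl (ds[k]) ds).Nodup := by
      rw [hdsk, hds, ← dists_rotl T r L]
      exact dists_nodup T L
    have hval : (rotl (ds[k]) ds)[(if k < m then m - k else m + (ds.length - k))]'(by
        rw [rotl_length hsort hk rfl]; exact hposkN) = cw L (antipode r) := by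
      rw [cw_rot r L (antipode r), cw_antipode, ← hdsk]
      rcases Nat.lt_or_ge k m with hklt | hkge
      · have hlt1 : ds[k] < π := by
          rw [← hdsm]; exact sorted_getElem_lt hsort hklt hm
        rw [if_pos (le_of_lt hlt1)]
        have e1 : (if k < m then m - k else m + (ds.length - k)) = m - k := if_pos hklt
        simp only [e1]
        rw [rotl_getElem_lo hsort hk rfl (by omega)]
        have hidx : k + (m - k) = m := by omega
        simp only [hidx, hdsm]
      · have hmk : m < k := by omega
        have hgt1 : π < ds[k] := by
          rw [← hdsm]; exact sorted_getElem_lt hsort hmk hk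
        rw [if_neg (not_le.mpr hgt1)]
        have e1 : (if k < m then m - k else m + (ds.length - k)) = m + (ds.length - k) :=
          if_neg (by omega)
        simp only [e1]
        rw [rotl_getElem_hi hsort hk rfl (by omega) (by omega)]
        have hidx : m + (ds.length - k) - (ds.length - k) = m := by omega
        simp only [hidx, hdsm]
        ring
    rw [← hS, dists_erase, dists_rotl T r L, ← hds, ← hdsk, ← hval]
    exact List.Nodup.erase_getElem hnodup _ _
  rw [hdsr, hdsL] at hbad0
  exact main_abstract hsort hub ds0 hm hm0 hdsm MIN hk hk0 hkm hbad0

end Stmt6Aux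
theorem stmt6 (S : Finset Real.Angle) (hasym : RotAsym S)
    (L : Real.Angle) (hL : TrueLeader S L)
    (r : Real.Angle) (hr : r ∈ S) (hrL : r ≠ L)
    (h0 : RotAsym (C0 S r)) (h1 : RotAsym (C1 S r))
    (hxor : Xor' (TrueLeader (C0 S r) r) (TrueLeader (C1 S r) r)) :
    TrueLeader (C0 S r) r ∧ ¬ TrueLeader (C1 S r) r := by
  by_cases haS : antipode r ∈ S
  · have hC1 : C1 S r = S := Finset.insert_eq_self.mpr haS
    have hnot : ¬ TrueLeader (C1 S r) r := by
      rw [hC1]; exact Stmt6Aux.leader_not_two hL hr hrL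
    rcases hxor with ⟨ha, hb⟩ | ⟨ha, hb⟩
    · exact ⟨ha, hb⟩
    · exact absurd ha hnot
  · have hC0 : C0 S r = S := Finset.erase_eq_of_notMem haS
    have hnot : ¬ TrueLeader (C0 S r) r := by
      rw [hC0]; exact Stmt6Aux.leader_not_two hL hr hrL
    rcases hxor with ⟨ha, hb⟩ | ⟨ha, hb⟩
    · exact absurd ha hnot
    · exact (Stmt6Aux.core hr haS ha hL hrL).elim
end
end

section
/- In a rotationally asymmetric configuration of finitely many distinct points on a circle with true leader L: if L is an undecided leader (i.e., L is the true leader when its antipode is assumed empty but not when its antipode is assumed occupied, both hypotheses being consistent), then the antipodal position of L is in fact empty (not occupied by any point of the configuration). -/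
open Real
open scoped Classical

noncomputable section

namespace CWAux


theorem cw_nonneg (p q : Real.Angle) : 0 ≤ cw p q := by
  unfold cw; split
  · assumption
  · nlinarith [Real.Angle.neg_pi_lt_toReal (q - p), Real.pi_pos]

theorem cw_lt_two_pi (p q : Real.Angle) : cw p q < 2 * π := by
  unfold cw; split
  · nlinarith [Real.Angle.toReal_le_pi (q - p), Real.pi_pos]
  · nlinarith [Real.Angle.toReal_le_pi (q - p)]

theorem coe_cw (p q : Real.Angle) : ((cw p q : ℝ) : Real.Angle) = q - p := by
  unfold cw; split
  · exact Real.Angle.coe_toReal _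
  · rw [Real.Angle.coe_add, Real.Angle.coe_two_pi, add_zero]
    exact Real.Angle.coe_toReal _

theorem add_cw (p q : Real.Angle) : p + ((cw p q : ℝ) : Real.Angle) = q := by
  rw [coe_cw]; abel

theorem cw_right_inj {p q q' : Real.Angle} (h : cw p q = cw p q') : q = q' := by
  have := add_cw p q
  rw [h, add_cw] at this; exact this.symm

theorem cw_self (p : Real.Angle) : cw p p = 0 := by
  unfold cw
  simp [Real.Angle.toReal_zero]

theorem cw_coe (p : Real.Angle) (δ : ℝ) (h0 : 0 ≤ δ) (h2 : δ < 2 * π) :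
    cw p (p + (δ : Real.Angle)) = δ := by
  have hsub : (p + (δ : Real.Angle)) - p = (δ : Real.Angle) := by abel
  unfold cw
  rw [hsub]
  by_cases hle : δ ≤ π
  · rw [Real.Angle.toReal_coe_eq_self_iff.2 ⟨by nlinarith [Real.pi_pos], hle⟩]
    simp [h0]
  · have hcoe : ((δ : ℝ) : Real.Angle) = ((δ - 2*π : ℝ) : Real.Angle) := by
      rw [sub_eq_add_neg, Real.Angle.coe_add, Real.Angle.coe_neg, Real.Angle.coe_two_pi]
      simp
    rw [hcoe, Real.Angle.toReal_coe_eq_self_iff.2 ⟨by nlinarith, by nlinarith [Real.pi_pos]⟩]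
    have : ¬ (0 ≤ δ - 2*π) := by nlinarith
    rw [if_neg this]; ring

theorem cw_antipode (p : Real.Angle) : cw p (p + ((π:ℝ) : Real.Angle)) = π := by
  have := cw_coe p π (le_of_lt Real.pi_pos) (by nlinarith [Real.pi_pos])
  exact this




theorem sorted_ext : ∀ (l₁ l₂ : List ℝ), l₁.Pairwise (· < ·) → l₂.Pairwise (· < ·) →
    (∀ x, x ∈ l₁ ↔ x ∈ l₂) → l₁ = l₂
  | [], [], _, _, _ => rfl
  | [], b :: l₂, _, _, h => absurd ((h b).2 (List.mem_cons_self (a := b) (l := l₂))) List.not_mem_nil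
  | a :: l₁, [], _, _, h => absurd ((h a).1 (List.mem_cons_self (a := a) (l := l₁))) List.not_mem_nil
  | a :: l₁, b :: l₂, s₁, s₂, h => by
    have hab : a = b := by
      rcases List.mem_cons.1 ((h a).1 (List.mem_cons_self (a := a) (l := l₁))) with h1 | h1
      · exact h1
      · rcases List.mem_cons.1 ((h b).2 (List.mem_cons_self (a := b) (l := l₂))) with h2 | h2
        · exact h2.symm
        · exact absurd (lt_trans ((List.pairwise_cons.1 s₂).1 a h1) ((List.pairwise_cons.1 s₁).1 b h2)) (lt_irrefl _)
    subst hab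
    have htail : ∀ x, x ∈ l₁ ↔ x ∈ l₂ := by
      intro x
      constructor
      · intro hx
        have hax : a < x := (List.pairwise_cons.1 s₁).1 x hx
        rcases List.mem_cons.1 ((h x).1 (List.mem_cons.2 (Or.inr hx))) with h1 | h1
        · exact absurd (h1 ▸ hax) (lt_irrefl _)
        · exact h1
      · intro hx
        have hax : a < x := (List.pairwise_cons.1 s₂).1 x hx
        rcases List.mem_cons.1 ((h x).2 (List.mem_cons.2 (Or.inr hx))) with h1 | h1
        · exact absurd (h1 ▸ hax) (lt_irrefl _)
        · exact h1
    rw [sorted_ext l₁ l₂ (List.pairwise_cons.1 s₁).2 (List.pairwise_cons.1 s₂).2 htail]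

theorem lex_cons_iff' {a b : ℝ} {l m : List ℝ} :
    List.Lex (· < ·) (a :: l) (b :: m) ↔ a < b ∨ (a = b ∧ List.Lex (· < ·) l m) := by
  constructor
  · intro h
    cases h with
    | rel h => exact Or.inl h
    | cons h => exact Or.inr ⟨rfl, h⟩
  · rintro (h | ⟨rfl, h⟩)
    · exact List.Lex.rel h
    · exact List.Lex.cons h

theorem lex_map_range {f g : ℕ → ℝ} : ∀ {n : ℕ},
    List.Lex (· < ·) ((List.range n).map f) ((List.range n).map g) ↔
      ∃ k < n, (∀ i < k, f i = g i) ∧ f k < g k := by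
  intro n
  induction n generalizing f g with
  | zero => simp
  | succ n ih =>
    rw [List.range_succ_eq_map]
    simp only [List.map_cons, List.map_map]
    rw [lex_cons_iff']
    constructor
    · rintro (h | ⟨h0, h⟩)
      · exact ⟨0, Nat.succ_pos n, fun i hi => absurd hi (Nat.not_lt_zero i), h⟩
      · obtain ⟨k, hk, hpre, hlt⟩ := (ih (f := f ∘ Nat.succ) (g := g ∘ Nat.succ)).1 h
        refine ⟨k + 1, Nat.succ_lt_succ hk, ?_, hlt⟩
        intro i hi
        cases i with
        | zero => exact h0
        | succ i => exact hpre i (Nat.lt_of_succ_lt_succ hi)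
    · rintro ⟨k, hk, hpre, hlt⟩
      cases k with
      | zero => exact Or.inl hlt
      | succ k =>
        refine Or.inr ⟨hpre 0 (Nat.succ_pos k), (ih (f := f ∘ Nat.succ) (g := g ∘ Nat.succ)).2
          ⟨k, Nat.lt_of_succ_lt_succ hk, fun i hi => hpre (i+1) (Nat.succ_lt_succ hi), hlt⟩⟩

theorem tail_map_range (f : ℕ → ℝ) (n : ℕ) (hn : 1 ≤ n) :
    ((List.range n).map f).tail ++ [f n] = (List.range n).map (fun i => f (i + 1)) := by
  obtain ⟨m, rfl⟩ := Nat.exists_eq_add_of_le hn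
  rw [show 1 + m = m + 1 by ring]
  conv_lhs => rw [List.range_succ_eq_map]
  conv_rhs => rw [List.range_succ]
  rw [List.map_cons, List.tail_cons, List.map_map, List.map_append]
  rfl

theorem zipWith_sub_map_range (f g : ℕ → ℝ) (n : ℕ) :
    List.zipWith (fun a b => a - b) ((List.range n).map f) ((List.range n).map g) =
      (List.range n).map (fun i => f i - g i) := by
  induction n with
  | zero => rfl
  | succ n ih => rw [List.range_succ, List.map_append, List.map_append, List.map_append,
      List.zipWith_append (by simp), ih]; rfl

theorem telescope (u : ℕ → ℝ) (a : ℕ) : ∀ m : ℕ,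
    u (a + m) - u a = ∑ i ∈ Finset.range m, (u (a + i + 1) - u (a + i))
  | 0 => by simp
  | (m+1) => by
    rw [Finset.sum_range_succ, ← telescope u a m, ← Nat.add_assoc]
    ring




def stair (n : ℕ) (d : ℕ → ℝ) : ℕ → ℝ := fun l => d (l % n) + 2 * π * (l / n : ℕ)

section Rep

variable {S : Finset Real.Angle} {p : Real.Angle} {n : ℕ} {d : ℕ → ℝ}
variable (hn : 1 ≤ n) (hcard : S.card = n)
  (hmono : ∀ i j, i < j → j < n → d i < d j)
  (hlow : 0 ≤ d 0) (hhigh : d (n-1) < 2 * π)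
  (hmem : ∀ i < n, p + ((d i : ℝ) : Real.Angle) ∈ S)

include hn hmono hlow hhigh

theorem d_lt_two_pi : ∀ i < n, d i < 2 * π := by
  intro i hi
  rcases eq_or_lt_of_le (Nat.le_pred_of_lt hi) with h | h
  · rw [h]; exact hhigh
  · exact lt_trans (hmono i (n-1) h (by omega)) hhigh

theorem d_nonneg : ∀ i < n, 0 ≤ d i := by
  intro i hi
  rcases Nat.eq_zero_or_pos i with h | h
  · rw [h]; exact hlow
  · exact le_of_lt (lt_of_le_of_lt hlow (hmono 0 i h hi))

theorem stair_eq_of_lt : ∀ i < n, stair n d i = d i := by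
  intro i hi
  unfold stair
  rw [Nat.mod_eq_of_lt hi, Nat.div_eq_of_lt hi]
  simp

theorem stair_per (l : ℕ) : stair n d (l + n) = stair n d l + 2 * π := by
  unfold stair
  rw [Nat.add_mod_right, Nat.add_div_right _ (by omega)]
  push_cast
  ring

theorem stair_mono : StrictMono (stair n d) := by
  apply strictMono_nat_of_lt_succ
  intro l
  have hl : l % n < n := Nat.mod_lt _ (by omega)
  have hdm : l = l % n + n * (l / n) := (Nat.mod_add_div l n).symm
  rcases eq_or_lt_of_le (Nat.succ_le_of_lt hl) with h | h
  · -- l % n + 1 = n : next step wraps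
    have hx : n * (l / n + 1) = n * (l / n) + n := by ring
    have h1 : l + 1 = 0 + n * (l / n + 1) := by omega
    have : stair n d (l+1) = d 0 + 2 * π * ((l / n : ℕ) + 1) := by
      unfold stair
      rw [h1, Nat.add_mul_mod_self_left, Nat.add_mul_div_left _ _ (show 0 < n by omega)]
      norm_num
    rw [this]
    unfold stair
    have := d_lt_two_pi hn hmono hlow hhigh (l % n) hl
    push_cast
    nlinarith [this, hlow]
  · -- no wrap
    have h1 : l + 1 = (l % n + 1) + n * (l / n) := by omega
    have : stair n d (l+1) = d (l % n + 1) + 2 * π * (l / n : ℕ) := by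
      unfold stair
      rw [h1, Nat.add_mul_mod_self_left, Nat.add_mul_div_left _ _ (show 0 < n by omega),
        Nat.mod_eq_of_lt h, Nat.div_eq_of_lt h]
      norm_num
    rw [this]
    unfold stair
    have := hmono (l % n) (l % n + 1) (Nat.lt_succ_self _) h
    linarith

include hcard hmem

theorem S_eq : S = (Finset.range n).image (fun i => p + ((d i : ℝ) : Real.Angle)) := by
  symm
  apply Finset.eq_of_subset_of_card_le
  · intro x hx
    simp only [Finset.mem_image, Finset.mem_range] at hx
    obtain ⟨i, hi, rfl⟩ := hx
    exact hmem i hi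
  · rw [hcard, Finset.card_image_of_injOn, Finset.card_range]
    intro i hi j hj hij
    simp only [Finset.mem_coe, Finset.mem_range] at hi hj
    have hi' := cw_coe p (d i) (d_nonneg hn hmono hlow hhigh i hi) (d_lt_two_pi hn hmono hlow hhigh i hi)
    have hj' := cw_coe p (d j) (d_nonneg hn hmono hlow hhigh j hj) (d_lt_two_pi hn hmono hlow hhigh j hj)
    have : d i = d j := by rw [← hi', ← hj']; exact congrArg (cw p) hij
    by_contra hne
    rcases Nat.lt_or_ge i j with h | h
    · exact absurd this (ne_of_lt (hmono i j h hj))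
    · rcases eq_or_lt_of_le h with h' | h'
      · exact hne h'.symm
      · exact absurd this.symm (ne_of_lt (hmono j i h' hi))

theorem dists_rot : ∀ j < n, dists S (p + ((d j : ℝ) : Real.Angle)) =
    (List.range n).map (fun i => stair n d (j + i) - stair n d j) := by
  intro j hj
  set r := p + ((d j : ℝ) : Real.Angle) with hr
  set u := stair n d with hu
  have humono := stair_mono hn hmono hlow hhigh (d := d)
  -- key: for each i < n, the value u (j+i) - u j equals cw r y for the point y with index (j+i) % n
  have key : ∀ i < n, cw r (p + ((d ((j + i) % n) : ℝ) : Real.Angle)) = u (j + i) - u j := by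
    intro i hi
    have hδ0 : 0 ≤ u (j + i) - u j := by
      have := humono.monotone (Nat.le_add_right j i); linarith
    have hδ2 : u (j + i) - u j < 2 * π := by
      have h1 : u (j + i) < u (j + n) := humono (by omega)
      have h2 : u (j + n) = u j + 2 * π := stair_per hn hmono hlow hhigh j
      linarith
    have harith : r + (((u (j+i) - u j : ℝ)) : Real.Angle) = p + ((d ((j + i) % n) : ℝ) : Real.Angle) := by
      have hc : (j + i) / n = 0 ∨ (j + i) / n = 1 := by
        rcases Nat.lt_or_ge (j+i) n with h | h
        · left; exact Nat.div_eq_of_lt h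
        · right
          exact Nat.div_eq_of_lt_le (by omega) (by omega)
      have hval : u (j + i) - u j = d ((j + i) % n) - d j + 2 * π * ((j+i)/n : ℕ) := by
        rw [hu]
        unfold stair
        rw [Nat.mod_eq_of_lt hj, Nat.div_eq_of_lt hj]
        push_cast; ring
      have hcoe : (((u (j+i) - u j : ℝ)) : Real.Angle) =
          ((d ((j+i) % n) : ℝ) : Real.Angle) - ((d j : ℝ) : Real.Angle) := by
        rcases hc with hc | hc
        · rw [hval, hc]; norm_num
        · rw [hval, hc]; norm_num
      rw [hr, hcoe]
      abel
    rw [← harith]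
    exact cw_coe r _ hδ0 hδ2
  -- both lists sorted with same membership
  apply sorted_ext
  · exact List.sortedLT_iff_pairwise.1 (Finset.sortedLT_sort _)
  · rw [List.pairwise_map]
    apply List.Pairwise.imp_of_mem (R := (· < ·))
    · intro a b _ _ hab
      have := humono (show j + a < j + b by omega)
      linarith
    · exact List.pairwise_lt_range (n := n)
  · intro x
    rw [show dists S r = (S.image (cw r)).sort (· ≤ ·) from rfl]
    rw [Finset.mem_sort, Finset.mem_image]
    simp only [List.mem_map, List.mem_range]
    constructor
    · rintro ⟨y, hy, rfl⟩
      rw [S_eq hn hcard hmono hlow hhigh hmem, Finset.mem_image] at hy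
      obtain ⟨l, hl, rfl⟩ := hy
      rw [Finset.mem_range] at hl
      refine ⟨if j ≤ l then l - j else l + n - j, by split <;> omega, ?_⟩
      have hmod : (j + (if j ≤ l then l - j else l + n - j)) % n = l := by
        split <;> rename_i h
        · rw [show j + (l - j) = l by omega, Nat.mod_eq_of_lt hl]
        · rw [show j + (l + n - j) = l + n by omega, Nat.add_mod_right, Nat.mod_eq_of_lt hl]
      rw [← key _ (by split <;> omega), hmod]
    · rintro ⟨i, hi, rfl⟩
      exact ⟨p + ((d ((j + i) % n) : ℝ) : Real.Angle),
        hmem _ (Nat.mod_lt _ (by omega)), key i hi⟩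

end Rep



/-- index-skipping map for the erased configuration -/
def SK (n M : ℕ) : ℕ → ℕ :=
  fun l => (if l % (n-1) < M then l % (n-1) else l % (n-1) + 1) + n * (l / (n-1))

section Core

variable {n M : ℕ} {u g h : ℕ → ℝ}
variable (hn : 2 ≤ n) (hM1 : 1 ≤ M) (hMn : M ≤ n - 1)
  (hgdef : ∀ i, g i = u (i+1) - u i)
  (hhdef : ∀ l, h l = u (SK n M (l+1)) - u (SK n M l))
  (humono : StrictMono u)
  (huper : ∀ l, u (l + n) = u l + 2 * π)
  (hhalf : u M - u 0 = π)
  (hmin : ∀ q, 1 ≤ q → q < n → ∃ k < n, (∀ i < k, g i = g (q+i)) ∧ g k < g (q+k))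

include hn hM1 hMn hgdef hhdef humono huper hhalf hmin

theorem core (q : ℕ) (hq1 : 1 ≤ q) (hqn : q < n) (hqM : q ≠ M) :
    ∃ k < n - 1,
      (∀ i < k, h i = h ((if q < M then q else q - 1) + i)) ∧
      h k < h ((if q < M then q else q - 1) + k) := by
  set N := n - 1 with hN
  have hN1 : 1 ≤ N := by omega
  have gpos : ∀ i, 0 < g i := by
    intro i; rw [hgdef]; have := humono (Nat.lt_succ_self i); linarith
  have gper : ∀ i, g (i + n) = g i := by
    intro i
    rw [hgdef, hgdef, show i + n + 1 = (i+1) + n by ring, huper, huper]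
    ring
  -- SK computations
  have SK1 : ∀ a, a < N → SK n M a = if a < M then a else a + 1 := by
    intro a ha
    unfold SK
    rw [← hN, Nat.mod_eq_of_lt ha, Nat.div_eq_of_lt ha, Nat.mul_zero, Nat.add_zero]
  have SK2 : ∀ a, a < N → SK n M (N + a) = (if a < M then a else a + 1) + n := by
    intro a ha
    unfold SK
    rw [← hN, show N + a = a + 1 * N by ring, Nat.add_mul_mod_self_right,
      Nat.add_mul_div_right _ _ (by omega), Nat.mod_eq_of_lt ha, Nat.div_eq_of_lt ha]
    ring
  -- h computations
  have hA : ∀ i, i + 1 < M → h i = g i := by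
    intro i hi
    rw [hhdef, hgdef, SK1 i (by omega), SK1 (i+1) (by omega), if_pos (by omega), if_pos (by omega)]
  have hB : h (M - 1) = g (M - 1) + g M := by
    rw [hhdef, hgdef, hgdef, SK1 (M-1) (by omega), if_pos (by omega)]
    have hSKM : SK n M (M - 1 + 1) = M + 1 := by
      rw [show M - 1 + 1 = M by omega]
      unfold SK
      rw [← hN]
      rcases Nat.lt_or_ge M N with hMN | hMN
      · rw [Nat.mod_eq_of_lt hMN, Nat.div_eq_of_lt hMN, if_neg (by omega)]
        omega
      · have hMeq : M = N := by omega
        rw [hMeq, Nat.mod_self, Nat.div_self (by omega), if_pos (by omega)]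
        omega
    rw [hSKM, show M - 1 + 1 = M by omega]
    ring
  have hC : ∀ i, M ≤ i → i < N → h i = g (i + 1) := by
    intro i hMi hiN
    have hSKi : SK n M (i+1) = i + 2 := by
      unfold SK
      rw [← hN]
      rcases Nat.lt_or_ge (i+1) N with hi1 | hi1
      · rw [Nat.mod_eq_of_lt hi1, Nat.div_eq_of_lt hi1, if_neg (by omega)]
        omega
      · have hieq : i + 1 = N := by omega
        rw [hieq, Nat.mod_self, Nat.div_self (by omega), if_pos (by omega)]
        omega
    rw [hhdef, hgdef, SK1 i hiN, if_neg (by omega), hSKi]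
  have hA' : ∀ a, a + 1 < M → h (N + a) = g (n + a) := by
    intro a ha
    rw [hhdef, hgdef, SK2 a (by omega), if_pos (by omega),
      show N + a + 1 = N + (a+1) by ring, SK2 (a+1) (by omega), if_pos (by omega)]
    congr 2 <;> omega
  -- FD1 : first-difference clash
  have FD1 : ∀ s j, 1 ≤ s → s < n → (∀ i < j, g i = g (s + i)) → g j ≤ g (s + j) := by
    intro s j hs1 hsn hprefix
    obtain ⟨k, hkn, hp, hl⟩ := hmin s hs1 hsn
    rcases lt_trichotomy k j with hkj | hkj | hkj
    · exact absurd (hprefix k hkj) (ne_of_lt hl)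
    · subst hkj; exact le_of_lt hl
    · exact le_of_eq (hp j hkj)
  obtain ⟨k, hkn, hpre, hstr⟩ := hmin q hq1 hqn
  rcases Nat.lt_or_ge q M with hcase | hcase
  · -- Case 1 : q < M
    rw [if_pos hcase]
    set t := M - 1 - q with ht
    by_cases hkt : k < t
    · refine ⟨k, by omega, ?_, ?_⟩
      · intro i hi
        rw [hA i (by omega), hA (q+i) (by omega)]
        exact hpre i hi
      · rw [hA k (by omega), hA (q+k) (by omega)]
        exact hstr
    · refine ⟨t, by omega, ?_, ?_⟩
      · intro i hi
        rw [hA i (by omega), hA (q+i) (by omega)]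
        exact hpre i (by omega)
      · rw [hA t (by omega), show q + t = M - 1 by omega, hB]
        rcases eq_or_lt_of_le (Nat.le_of_not_lt hkt) with h' | h'
        · have := hstr
          rw [← h', show q + t = M - 1 by omega] at this
          -- t = k case: g t < g (M-1)
          rw [h'] at this ⊢
          nlinarith [gpos M, this]
        · have := hpre t h'
          rw [show q + t = M - 1 by omega] at this
          nlinarith [gpos M, this]
  · -- Case 2 : q > M
    have hqM' : M < q := by omega
    rw [if_neg (by omega)]
    by_cases hkM : k + 1 < M
    · -- subcase 2a
      have entry : ∀ i, i + 2 ≤ M → h (q - 1 + i) = g (q + i) := by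
        intro i hi2
        rcases Nat.lt_or_ge (q - 1 + i) N with hreg | hreg
        · rw [hC (q-1+i) (by omega) hreg]
          congr 1; omega
        · have ha : q - 1 + i = N + (q + i - n) := by omega
          rw [ha, hA' (q + i - n) (by omega)]
          congr 1; omega
      refine ⟨k, by omega, ?_, ?_⟩
      · intro i hi
        rw [hA i (by omega), entry i (by omega)]
        exact hpre i hi
      · rw [hA k (by omega), entry k (by omega)]
        exact hstr
    · -- subcase 2b : k ≥ M - 1, derive False
      exfalso
      have hkM1 : M - 1 ≤ k := by omega
      have hpre' : ∀ i, i + 1 < M → g i = g (q + i) := fun i hi => hpre i (by omega)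
      have hM1le : g (M-1) ≤ g (q + (M-1)) := by
        rcases eq_or_lt_of_le hkM1 with h' | h'
        · rw [h']; exact le_of_lt hstr
        · exact le_of_eq (hpre (M-1) h')
      by_cases hwrap : q + M ≤ n
      · -- no wrap : sum contradiction
        have sum1 : u (q + M) - u q = ∑ i ∈ Finset.range M, g (q + i) := by
          rw [telescope u q M]
          apply Finset.sum_congr rfl
          intro i _
          rw [hgdef]
        have sum2 : u M - u 0 = ∑ i ∈ Finset.range M, g i := by
          have := telescope u 0 M
          simp only [Nat.zero_add] at this
          rw [this]
          apply Finset.sum_congr rfl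
          intro i _
          rw [hgdef]
        have hsum_le : ∑ i ∈ Finset.range M, g i ≤ ∑ i ∈ Finset.range M, g (q + i) := by
          apply Finset.sum_le_sum
          intro i hi
          rw [Finset.mem_range] at hi
          rcases Nat.lt_or_ge (i+1) M with h' | h'
          · exact le_of_eq (hpre' i h')
          · rw [show i = M - 1 by omega]
            exact hM1le
        have h1 : (π:ℝ) ≤ u (q + M) - u q := by
          rw [sum1, ← hhalf, sum2]; exact hsum_le
        have h2 : u (q + M) ≤ u n := humono.monotone hwrap
        have h3 : u (M + 1) ≤ u q := humono.monotone (by omega)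
        have h4 : u M < u (M + 1) := humono (Nat.lt_succ_self M)
        have h5 : u n = u 0 + 2 * π := by
          have := huper 0; rw [Nat.zero_add] at this; exact this
        linarith
      · -- wrap : s = n - q
        set s := n - q with hs
        have hs1 : 1 ≤ s := by omega
        have hsM : s + 1 ≤ M := by omega
        have perfact : ∀ i, s ≤ i → g (q + i) = g (i - s) := by
          intro i hi
          rw [show q + i = (i - s) + n by omega, gper]
        have w3pre : ∀ i, i < M - 1 - s → g i = g (s + i) := by
          intro i hi
          have h1 := hpre' (s + i) (by omega)
          rw [perfact (s + i) (by omega), show s + i - s = i by omega] at h1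
          exact h1.symm
        have E : g (M - 1 - s) = g (M - 1) := by
          have le1 := FD1 s (M - 1 - s) hs1 (by omega) w3pre
          rw [show s + (M - 1 - s) = M - 1 by omega] at le1
          have ge1 := hM1le
          rw [perfact (M-1) (by omega)] at ge1
          rw [show M - 1 - s = M - 1 - s from rfl] at ge1
          exact le_antisymm le1 ge1
        have kM : M ≤ k := by
          by_contra hc
          have hk' : k = M - 1 := by omega
          rw [hk', perfact (M-1) (by omega)] at hstr
          rw [E] at hstr
          exact absurd hstr (lt_irrefl _)
        have w6pre : ∀ i, i < k - s → g i = g (s + i) := by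
          intro i hi
          rcases Nat.lt_or_ge i (M - 1 - s) with h' | h'
          · exact w3pre i h'
          · rcases eq_or_lt_of_le h' with h'' | h''
            · rw [← h'', show s + (M - 1 - s) = M - 1 by omega]
              exact E
            · have h1 := hpre (s + i) (by omega)
              rw [show q + (s + i) = i + n by omega, gper] at h1
              exact h1.symm
        have final := FD1 s (k - s) hs1 (by omega) w6pre
        rw [show s + (k - s) = k by omega] at final
        rw [perfact k (by omega)] at hstr
        linarith

end Core

theorem gap_rep {S : Finset Real.Angle} {r : Real.Angle} {n j : ℕ} {u : ℕ → ℝ}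
    (hn : 1 ≤ n)
    (hdl : dists S r = (List.range n).map (fun i => u (j+i) - u j))
    (h2pi : u (j+n) - u j = 2 * π) :
    gapSeq S r = (List.range n).map (fun i => u (j+i+1) - u (j+i)) := by
  unfold gapSeq
  rw [hdl]
  rw [show (2*π : ℝ) = (fun i => u (j+i) - u j) n by simpa using h2pi.symm]
  rw [tail_map_range _ n hn, zipWith_sub_map_range]
  apply List.map_congr_left
  intro i _
  show (u (j+(i+1)) - u j) - (u (j+i) - u j) = u (j+i+1) - u (j+i)
  rw [show j + (i+1) = j + i + 1 by ring]
  ring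

end CWAux

theorem stmt7 (S : Finset Real.Angle) (hasym : RotAsym S)
    (L : Real.Angle) (hL : TrueLeader S L) (hU : Undecided S L) :
    antipode L ∉ S := by
  intro hmem
  classical
  obtain ⟨hLS, hasym0, hasym1, hxor⟩ := hU
  have hC1 : C1 S L = S := Finset.insert_eq_self.2 hmem
  have hTL1 : TrueLeader (C1 S L) L := by rw [hC1]; exact hL
  have hnot : ¬ TrueLeader (C0 S L) L := by
    rcases hxor with ⟨_, h1⟩ | ⟨_, h0⟩
    · exact absurd hTL1 h1
    · exact h0
  apply hnot
  open CWAux in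
  -- setup
  obtain ⟨n, hn⟩ : ∃ n, S.card = n := ⟨S.card, rfl⟩
  have hnpos : 1 ≤ n := by rw [← hn]; exact Finset.card_pos.2 ⟨L, hLS⟩
  have hLneA : L ≠ antipode L := by
    intro h
    exact Real.Angle.pi_ne_zero (left_eq_add.1 h)
  have hLC0 : L ∈ C0 S L := Finset.mem_erase.2 ⟨hLneA, hLS⟩
  set d : ℕ → ℝ := fun i => (dists S L).getD i 0 with hd
  have hlen : (dists S L).length = n := by
    rw [dists, Finset.length_sort,
      Finset.card_image_of_injective _ (fun a b h => cw_right_inj h), hn]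
  have hgetd : ∀ i (hi : i < n), d i = (dists S L)[i]'(by rw [hlen]; exact hi) := by
    intro i hi
    exact List.getD_eq_getElem _ _ _
  have hsort : (dists S L).Pairwise (· < ·) := List.sortedLT_iff_pairwise.1 (Finset.sortedLT_sort _)
  have hmemD : ∀ x, x ∈ dists S L ↔ ∃ y ∈ S, cw L y = x := by
    intro x
    rw [dists, Finset.mem_sort, Finset.mem_image]
  have hmono : ∀ i j, i < j → j < n → d i < d j := by
    intro i j hij hj
    rw [hgetd i (lt_trans hij hj), hgetd j hj]
    exact List.Pairwise.rel_get_of_lt hsort (by simpa using hij)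
  have hdmem : ∀ i < n, ∃ y ∈ S, cw L y = d i := by
    intro i hi
    rw [hgetd i hi]
    exact (hmemD _).1 (List.getElem_mem _)
  have hd0 : d 0 = 0 := by
    have h0mem : (0:ℝ) ∈ dists S L := (hmemD 0).2 ⟨L, hLS, cw_self L⟩
    obtain ⟨i0, hi0, hi0eq⟩ := List.mem_iff_getElem.1 h0mem
    have hi0n : i0 < n := by rw [← hlen]; exact hi0
    rcases Nat.eq_zero_or_pos i0 with h | h
    · rw [hgetd 0 hnpos]; rw [← hi0eq]; congr 1; omega
    · exfalso
      obtain ⟨y, _, hy⟩ := hdmem 0 hnpos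
      have h1 : d 0 < d i0 := hmono 0 i0 h hi0n
      have h2 : d i0 = 0 := by rw [hgetd i0 hi0n]; exact hi0eq
      have h3 : 0 ≤ d 0 := by rw [← hy]; exact cw_nonneg L y
      linarith
  have hlow : 0 ≤ d 0 := le_of_eq hd0.symm
  have hhigh : d (n-1) < 2 * π := by
    obtain ⟨y, _, hy⟩ := hdmem (n-1) (by omega)
    rw [← hy]; exact cw_lt_two_pi L y
  have hmemP : ∀ i < n, L + ((d i : ℝ) : Real.Angle) ∈ S := by
    intro i hi
    obtain ⟨y, hyS, hy⟩ := hdmem i hi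
    rw [← hy, add_cw]
    exact hyS
  -- index of π
  have hπmem : (π:ℝ) ∈ dists S L := (hmemD π).2 ⟨antipode L, hmem, cw_antipode L⟩
  obtain ⟨M, hMlen, hdM⟩ := List.mem_iff_getElem.1 hπmem
  have hMn' : M < n := by rw [← hlen]; exact hMlen
  have hdMval : d M = π := by rw [hgetd M hMn']; exact hdM
  have hM1 : 1 ≤ M := by
    rcases Nat.eq_zero_or_pos M with h | h
    · exfalso
      rw [h, hd0] at hdMval
      exact Real.pi_ne_zero hdMval.symm
    · exact h
  have hn2 : 2 ≤ n := by omega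
  -- the point with a given rank is not L when rank ≥ 1
  have hrankL : ∀ q, 1 ≤ q → q < n → L + ((d q : ℝ) : Real.Angle) ≠ L := by
    intro q hq1 hqn h
    have h1 : cw L (L + ((d q : ℝ) : Real.Angle)) = d q :=
      cw_coe L (d q) (by linarith [hmono 0 q hq1 hqn, hd0])
        (by rcases eq_or_lt_of_le (Nat.le_pred_of_lt hqn) with h' | h'
            · rw [h']; exact hhigh
            · exact lt_trans (hmono q (n-1) h' (by omega)) hhigh)
    rw [h, cw_self] at h1
    have := hmono 0 q hq1 hqn
    rw [hd0, ← h1] at this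
    exact lt_irrefl _ this
  -- staircase and hmin
  have hSeq := S_eq hnpos hn hmono hlow hhigh hmemP
  have humono := stair_mono hnpos hmono hlow hhigh
  have huper := stair_per (d := d) hnpos hmono hlow hhigh
  have hhalf : stair n d M - stair n d 0 = π := by
    rw [stair_eq_of_lt hnpos hmono hlow hhigh M hMn', stair_eq_of_lt hnpos hmono hlow hhigh 0 (by omega), hdMval, hd0, sub_zero]
  have hgapL : gapSeq S L = (List.range n).map
      (fun i => stair n d (0+i+1) - stair n d (0+i)) := by
    have hL0 : L + ((d 0 : ℝ) : Real.Angle) = L := by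
      rw [hd0]; norm_num
    have h1 := dists_rot hnpos hn hmono hlow hhigh hmemP 0 (by omega)
    rw [hL0] at h1
    exact gap_rep hnpos h1 (by rw [huper 0]; ring)
  have hgapQ : ∀ q < n, gapSeq S (L + ((d q : ℝ) : Real.Angle)) = (List.range n).map
      (fun i => stair n d (q+i+1) - stair n d (q+i)) := by
    intro q hq
    exact gap_rep hnpos (dists_rot hnpos hn hmono hlow hhigh hmemP q hq)
      (by rw [huper q]; ring)
  have hmin : ∀ q, 1 ≤ q → q < n → ∃ k < n,
      (∀ i < k, (stair n d (i+1) - stair n d i) = (stair n d (q+i+1) - stair n d (q+i))) ∧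
      (stair n d (k+1) - stair n d k) < (stair n d (q+k+1) - stair n d (q+k)) := by
    intro q hq1 hqn
    have hlex := hL.2 (L + ((d q : ℝ) : Real.Angle)) (hmemP q hqn) (hrankL q hq1 hqn)
    rw [lexLt, hgapL, hgapQ q hqn] at hlex
    have := lex_map_range.1 hlex
    simpa using this
  -- erased configuration
  set d' : ℕ → ℝ := fun i => d (if i < M then i else i + 1) with hd'
  have hcard0 : (C0 S L).card = n - 1 := by
    rw [C0, Finset.card_erase_of_mem hmem, hn]
  have hn1' : 1 ≤ n - 1 := by omega
  have hmono' : ∀ i j, i < j → j < n - 1 → d' i < d' j := by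
    intro i j hij hj
    apply hmono
    · split <;> split <;> omega
    · split <;> omega
  have hlow' : 0 ≤ d' 0 := by
    show 0 ≤ d (if 0 < M then 0 else 1)
    rw [if_pos (show 0 < M by omega), hd0]
  have hhigh' : d' (n - 1 - 1) < 2 * π := by
    show d (if n - 1 - 1 < M then n - 1 - 1 else n - 1 - 1 + 1) < 2 * π
    rcases eq_or_lt_of_le (show (if n - 1 - 1 < M then n - 1 - 1 else n - 1 - 1 + 1) ≤ n - 1
        by split <;> omega) with h | h
    · rw [h]; exact hhigh
    · exact lt_trans (hmono _ (n-1) h (by omega)) hhigh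
  have hmemP' : ∀ i < n - 1, L + ((d' i : ℝ) : Real.Angle) ∈ C0 S L := by
    intro i hi
    have hskip : (if i < M then i else i + 1) < n := by split <;> omega
    apply Finset.mem_erase.2
    constructor
    · intro h
      have hb1 : 0 ≤ d' i := by
        rcases Nat.eq_zero_or_pos (if i < M then i else i + 1) with h' | h'
        · show 0 ≤ d (if i < M then i else i + 1); rw [h', hd0]
        · show 0 ≤ d (if i < M then i else i + 1)
          have := hmono 0 _ h' hskip
          linarith [hd0 ▸ this]
      have hb2 : d' i < 2 * π := by
        show d (if i < M then i else i + 1) < 2 * π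
        rcases eq_or_lt_of_le (Nat.le_pred_of_lt hskip) with h' | h'
        · rw [h']; exact hhigh
        · exact lt_trans (hmono _ (n-1) h' (by omega)) hhigh
      have h1 : cw L (L + ((d' i : ℝ) : Real.Angle)) = d' i := cw_coe L (d' i) hb1 hb2
      rw [h] at h1
      simp only [antipode] at h1
      rw [cw_antipode L] at h1
      -- d' i = π = d M, so skip i = M, contradiction
      have : d (if i < M then i else i + 1) = d M := by
        show d' i = d M
        rw [hdMval]
        exact h1.symm
      have hne : (if i < M then i else i + 1) ≠ M := by split <;> omega
      rcases Nat.lt_or_ge (if i < M then i else i + 1) M with h' | h'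
      · exact absurd this (ne_of_lt (hmono _ M h' hMn'))
      · exact absurd this.symm (ne_of_lt (hmono M _ (by omega) hskip))
    · exact hmemP _ hskip
  have hu'SK : ∀ l, stair (n-1) d' l = stair n d (SK n M l) := by
    intro l
    have ha : l % (n-1) < n - 1 := Nat.mod_lt _ (by omega)
    have hsklt : (if l % (n-1) < M then l % (n-1) else l % (n-1) + 1) < n := by
      split <;> omega
    show d' (l % (n-1)) + 2 * π * ((l / (n-1) : ℕ) : ℝ) = _
    unfold stair SK
    rw [Nat.add_mul_mod_self_left, Nat.mod_eq_of_lt hsklt,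
      Nat.add_mul_div_left _ _ (show 0 < n by omega), Nat.div_eq_of_lt hsklt]
    show d' (l % (n-1)) + 2 * π * ((l / (n-1) : ℕ) : ℝ) =
      d (if l % (n-1) < M then l % (n-1) else l % (n-1) + 1) + 2 * π * ((0 + l / (n-1) : ℕ) : ℝ)
    rw [Nat.zero_add]
  have hgapL0 : gapSeq (C0 S L) L = (List.range (n-1)).map
      (fun i => stair (n-1) d' (0+i+1) - stair (n-1) d' (0+i)) := by
    have hL0 : L + ((d' 0 : ℝ) : Real.Angle) = L := by
      have : d' 0 = 0 := by show d (if 0 < M then 0 else 1) = 0; rw [if_pos (show 0 < M by omega), hd0]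
      rw [this]; norm_num
    have h1 := dists_rot hn1' hcard0 hmono' hlow' hhigh' hmemP' 0 (by omega)
    rw [hL0] at h1
    exact gap_rep hn1' h1
      (by rw [stair_per hn1' hmono' hlow' hhigh' 0]; ring)
  -- conclusion : TrueLeader (C0 S L) L
  refine ⟨hLC0, ?_⟩
  intro r hr hrne
  have hrS : r ∈ S := Finset.mem_of_mem_erase hr
  have hrq : ∃ q < n, L + ((d q : ℝ) : Real.Angle) = r := by
    rw [hSeq] at hrS
    obtain ⟨q, hq, hqe⟩ := Finset.mem_image.1 hrS
    exact ⟨q, Finset.mem_range.1 hq, hqe⟩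
  obtain ⟨q, hqn, hqe⟩ := hrq
  have hq1 : 1 ≤ q := by
    rcases Nat.eq_zero_or_pos q with h | h
    · exfalso
      apply hrne
      rw [← hqe, h, hd0]
      norm_num
    · exact h
  have hqM : q ≠ M := by
    intro h
    have : r = antipode L := by
      rw [← hqe, h, hdMval, antipode]
    exact (Finset.mem_erase.1 hr).1 (by rw [this])
  -- rank of r in the erased configuration
  have hj'lt : (if q < M then q else q - 1) < n - 1 := by split <;> omega
  have hd'j' : d' (if q < M then q else q - 1) = d q := by
    rcases Nat.lt_or_ge q M with h | h
    · rw [if_pos h]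
      show d (if q < M then q else q + 1) = d q
      rw [if_pos h]
    · rw [if_neg (show ¬ (q < M) by omega)]
      show d (if q - 1 < M then q - 1 else q - 1 + 1) = d q
      rw [if_neg (show ¬ (q - 1 < M) by omega)]
      congr 1
      omega
  have hgapr : gapSeq (C0 S L) r = (List.range (n-1)).map
      (fun i => stair (n-1) d' ((if q < M then q else q - 1)+i+1) -
        stair (n-1) d' ((if q < M then q else q - 1)+i)) := by
    have h1 := dists_rot hn1' hcard0 hmono' hlow' hhigh' hmemP'
      (if q < M then q else q - 1) hj'lt
    rw [hd'j', hqe] at h1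
    exact gap_rep (j := (if q < M then q else q - 1)) hn1' h1
      (by rw [stair_per hn1' hmono' hlow' hhigh' (if q < M then q else q - 1)]; ring)
  rw [lexLt, hgapL0, hgapr]
  apply lex_map_range.2
  obtain ⟨k, hk, hpre, hstr⟩ := core hn2 hM1 (by omega)
    (fun i => rfl)
    (fun l => by
      show stair (n-1) d' (l+1) - stair (n-1) d' l =
        stair n d (SK n M (l+1)) - stair n d (SK n M l)
      rw [hu'SK, hu'SK])
    humono huper hhalf hmin q hq1 hqn hqM
    (g := fun i => stair n d (i+1) - stair n d i)
    (h := fun l => stair (n-1) d' (l+1) - stair (n-1) d' l)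
  refine ⟨k, hk, ?_, ?_⟩
  · intro i hi
    have := hpre i hi
    simpa using this
  · simpa using hstr
end
end

section
/- In a rotationally asymmetric configuration of finitely many distinct points on a circle, if a point r other than the true leader is an undecided leader, then the antipodal position of r is occupied by a point of the configuration. -/
open Real
open scoped Classical

noncomputable section

section Stmt8Helpers


lemma two_pi_pos' : (0:ℝ) < 2 * π := by positivity

lemma coe_inj_Ico {u v : ℝ} (hu : 0 ≤ u) (hu2 : u < 2*π) (hv : 0 ≤ v) (hv2 : v < 2*π)
    (h : (u : Real.Angle) = (v : Real.Angle)) : u = v := by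
  rw [Real.Angle.angle_eq_iff_two_pi_dvd_sub] at h
  obtain ⟨k, hk⟩ := h
  have h1 : (k:ℝ) < 1 := by nlinarith [pi_pos]
  have h2 : (-1:ℝ) < k := by nlinarith [pi_pos]
  have hk1 : k < 1 := by exact_mod_cast h1
  have hk2 : (-1:ℤ) < k := by exact_mod_cast h2
  have : k = 0 := by omega
  rw [this] at hk
  push_cast at hk
  linarith

lemma cw_nonneg (p q : Real.Angle) : 0 ≤ cw p q := by
  unfold cw
  split_ifs with h
  · exact h
  · have := Real.Angle.neg_pi_lt_toReal (q - p)
    nlinarith [pi_pos]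

lemma cw_lt_two_pi (p q : Real.Angle) : cw p q < 2*π := by
  unfold cw
  split_ifs with h
  · have := Real.Angle.toReal_le_pi (q - p)
    nlinarith [pi_pos]
  · push_neg at h; linarith

lemma coe_cw (p q : Real.Angle) : ((cw p q : ℝ) : Real.Angle) = q - p := by
  unfold cw
  split_ifs with h
  · exact Real.Angle.coe_toReal _
  · rw [Real.Angle.coe_add, Real.Angle.coe_two_pi, add_zero, Real.Angle.coe_toReal]

lemma cw_self (p : Real.Angle) : cw p p = 0 := by
  unfold cw
  simp [Real.Angle.toReal_zero]

lemma cw_eq_zero_iff {p q : Real.Angle} : cw p q = 0 ↔ q = p := by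
  constructor
  · intro h
    have := coe_cw p q
    rw [h] at this
    simp only [Real.Angle.coe_zero] at this
    have := this.symm
    rwa [sub_eq_zero] at this
  · rintro rfl; exact cw_self _

lemma cw_injective (p : Real.Angle) : Function.Injective (cw p) := by
  intro x y h
  have hx := coe_cw p x
  have hy := coe_cw p y
  rw [h] at hx
  rw [hx] at hy
  exact sub_left_injective hy

lemma cw_antipode (r : Real.Angle) : cw r (antipode r) = π := by
  have h : ((cw r (antipode r) : ℝ) : Real.Angle) = ((π:ℝ) : Real.Angle) := by
    rw [coe_cw]; unfold antipode; rw [add_sub_cancel_left]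
  exact coe_inj_Ico (cw_nonneg _ _) (cw_lt_two_pi _ _) (le_of_lt pi_pos)
    (by nlinarith [pi_pos]) h

def wrap (x : ℝ) : ℝ := if x < 0 then x + 2*π else x

lemma wrap_coe (x : ℝ) : ((wrap x : ℝ) : Real.Angle) = (x : Real.Angle) := by
  unfold wrap
  split_ifs with h
  · rw [Real.Angle.coe_add, Real.Angle.coe_two_pi, add_zero]
  · rfl

lemma wrap_mem {x : ℝ} (h1 : -(2*π) < x) (h2 : x < 2*π) : 0 ≤ wrap x ∧ wrap x < 2*π := by
  unfold wrap
  split_ifs with h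
  · constructor <;> linarith
  · push_neg at h; exact ⟨h, h2⟩

lemma cw_shift (p q x : Real.Angle) : cw q x = wrap (cw p x - cw p q) := by
  have hb : -(2*π) < cw p x - cw p q ∧ cw p x - cw p q < 2*π := by
    have := cw_nonneg p x; have := cw_lt_two_pi p x
    have := cw_nonneg p q; have := cw_lt_two_pi p q
    constructor <;> linarith
  have hw := wrap_mem hb.1 hb.2
  apply coe_inj_Ico (cw_nonneg _ _) (cw_lt_two_pi _ _) hw.1 hw.2
  rw [wrap_coe, Real.Angle.coe_sub, coe_cw, coe_cw, coe_cw]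
  exact (sub_sub_sub_cancel_right _ _ _).symm




def Dset (S : Finset Real.Angle) (p : Real.Angle) : Finset ℝ := S.image (cw p)

def rot (X : Finset ℝ) (c : ℝ) : Finset ℝ := X.image (fun x => wrap (x - c))

lemma Dset_rot (S : Finset Real.Angle) (p q : Real.Angle) :
    Dset S q = rot (Dset S p) (cw p q) := by
  unfold Dset rot
  rw [Finset.image_image]
  congr 1
  funext x
  exact cw_shift p q x

def setLt (X Y : Finset ℝ) : Prop :=
  ∃ w, w ∈ X ∧ w ∉ Y ∧ ∀ t, t < w → (t ∈ X ↔ t ∈ Y)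

lemma not_setLt {X Z : Finset ℝ} (w : ℝ) (hw1 : w ∈ Z) (hw2 : w ∉ X)
    (ha : ∀ t, t < w → (t ∈ X ↔ t ∈ Z)) : ¬ setLt X Z := by
  rintro ⟨w', h1, h2, h3⟩
  rcases lt_trichotomy w w' with h | h | h
  · exact hw2 ((h3 w h).mpr hw1)
  · subst h; exact hw2 h1
  · exact h2 ((ha w' h).mp h1)

lemma setLt_or {X Y : Finset ℝ} (hne : X ≠ Y) : setLt X Y ∨ setLt Y X := by
  classical
  set D : Finset ℝ := (X \ Y) ∪ (Y \ X) with hD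
  have hDne : D.Nonempty := by
    by_contra h
    apply hne
    ext a
    rw [Finset.not_nonempty_iff_eq_empty] at h
    have : a ∉ D := by rw [h]; exact Finset.notMem_empty a
    simp only [hD, Finset.mem_union, Finset.mem_sdiff, not_or, not_and, not_not] at this
    constructor
    · intro ha; exact this.1 ha
    · intro ha; exact this.2 ha
  set w := D.min' hDne with hw
  have hwD : w ∈ D := D.min'_mem hDne
  have hagree : ∀ t, t < w → (t ∈ X ↔ t ∈ Y) := by
    intro t ht
    by_contra hc
    have : t ∈ D := by
      simp only [hD, Finset.mem_union, Finset.mem_sdiff]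
      by_cases h1 : t ∈ X
      · left; exact ⟨h1, fun h2 => hc ⟨fun _ => h2, fun _ => h1⟩⟩
      · right
        refine ⟨?_, h1⟩
        by_contra h2
        exact hc ⟨fun h => absurd h h1, fun h => absurd h h2⟩
    have := D.min'_le t this
    linarith
  simp only [hD, Finset.mem_union, Finset.mem_sdiff] at hwD
  rcases hwD with ⟨h1, h2⟩ | ⟨h1, h2⟩
  · exact Or.inl ⟨w, h1, h2, hagree⟩
  · exact Or.inr ⟨w, h1, h2, fun t ht => (hagree t ht).symm⟩

lemma mem_rot {X : Finset ℝ} (hX : ∀ x ∈ X, 0 ≤ x ∧ x < 2*π) {c : ℝ} (hc1 : 0 ≤ c)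
    (hc2 : c < 2*π) {t : ℝ} (ht1 : 0 ≤ t) (ht2 : t < 2*π) :
    t ∈ rot X c ↔ (if t + c < 2*π then t + c else t + c - 2*π) ∈ X := by
  simp only [rot, Finset.mem_image]
  constructor
  · rintro ⟨x, hxX, hxe⟩
    obtain ⟨hx1, hx2⟩ := hX x hxX
    unfold wrap at hxe
    split_ifs at hxe with h
    · have hx : x = t + c - 2*π := by linarith
      rw [if_neg (by linarith), ← hx]; exact hxX
    · have hx : x = t + c := by linarith
      rw [if_pos (by push_neg at h; linarith), ← hx]; exact hxX
  · intro h
    split_ifs at h with h2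
    · refine ⟨t + c, h, ?_⟩
      unfold wrap
      rw [if_neg (by linarith)]
      ring
    · refine ⟨t + c - 2*π, h, ?_⟩
      unfold wrap
      rw [if_pos (by linarith)]
      ring

lemma rot_bounds {X : Finset ℝ} (hX : ∀ x ∈ X, 0 ≤ x ∧ x < 2*π) {c : ℝ} (hc1 : 0 ≤ c)
    (hc2 : c < 2*π) : ∀ t ∈ rot X c, 0 ≤ t ∧ t < 2*π := by
  intro t ht
  simp only [rot, Finset.mem_image] at ht
  obtain ⟨x, hxX, rfl⟩ := ht
  obtain ⟨hx1, hx2⟩ := hX x hxX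
  exact wrap_mem (by linarith) (by linarith)




def diffs (l : List ℝ) : List ℝ := List.zipWith (fun a b => a - b) (l.tail ++ [2 * π]) l

lemma gapSeq_eq_diffs (S : Finset Real.Angle) (p : Real.Angle) :
    gapSeq S p = diffs (dists S p) := rfl

lemma dists_eq_sort (S : Finset Real.Angle) (p : Real.Angle) :
    dists S p = (Dset S p).sort (· ≤ ·) := rfl

lemma lex_cons_iff' {x y : ℝ} {l1 l2 : List ℝ} :
    List.Lex (· < ·) (x :: l1) (y :: l2) ↔ x < y ∨ (x = y ∧ List.Lex (· < ·) l1 l2) := by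
  constructor
  · intro h
    cases h with
    | rel h => exact Or.inl h
    | cons h => exact Or.inr ⟨rfl, h⟩
  · rintro (h | ⟨rfl, h⟩)
    · exact List.Lex.rel h
    · exact List.Lex.cons h

lemma lex_irrefl (l : List ℝ) : ¬ List.Lex (· < ·) l l := by
  induction l with
  | nil => intro h; cases h
  | cons x t ih =>
      intro h
      rcases lex_cons_iff'.1 h with h | ⟨-, h⟩
      · exact lt_irrefl x h
      · exact ih h

lemma lex_asymm {l1 l2 : List ℝ} (h1 : List.Lex (· < ·) l1 l2)
    (h2 : List.Lex (· < ·) l2 l1) : False := by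
  induction l1 generalizing l2 with
  | nil => cases h2
  | cons x t ih =>
      cases l2 with
      | nil => cases h1
      | cons y s =>
          rcases lex_cons_iff'.1 h1 with ha | ⟨rfl, ha⟩
          · rcases lex_cons_iff'.1 h2 with hb | ⟨rfl, hb⟩
            · exact absurd hb (not_lt.2 (le_of_lt ha))
            · exact lt_irrefl _ ha
          · rcases lex_cons_iff'.1 h2 with hb | ⟨-, hb⟩
            · exact lt_irrefl _ hb
            · exact ih ha hb

lemma diffs_cons_cons (x y : ℝ) (a : List ℝ) :
    diffs (x :: y :: a) = (y - x) :: diffs (y :: a) := rfl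

lemma diffs_single (x : ℝ) : diffs [x] = [2*π - x] := rfl

lemma lemA : ∀ (a : List ℝ) (b : List ℝ) (x : ℝ), a.length = b.length →
    (List.Lex (· < ·) (diffs (x :: a)) (diffs (x :: b)) ↔ List.Lex (· < ·) a b) := by
  intro a
  induction a with
  | nil =>
      intro b x hlen
      cases b with
      | nil =>
          simp only [diffs_single]
          constructor
          · intro h; exact absurd h (lex_irrefl _)
          · intro h; exact absurd h (lex_irrefl _)
      | cons y s => simp at hlen
  | cons y a' ih =>
      intro b x hlen
      cases b with
      | nil => simp at hlen
      | cons z b' =>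
          simp only [List.length_cons, Nat.succ_inj] at hlen
          rw [diffs_cons_cons, diffs_cons_cons, lex_cons_iff', lex_cons_iff']
          constructor
          · rintro (h | ⟨h1, h2⟩)
            · exact Or.inl (by linarith)
            · have : y = z := by linarith
              subst this
              exact Or.inr ⟨rfl, (ih b' y hlen).1 h2⟩
          · rintro (h | ⟨rfl, h⟩)
            · exact Or.inl (by linarith)
            · exact Or.inr ⟨rfl, (ih b' y hlen).2 h⟩

lemma sort_head_zero {X : Finset ℝ} (h0 : (0:ℝ) ∈ X) (hX : ∀ x ∈ X, 0 ≤ x) :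
    ∃ t, X.sort (· ≤ ·) = 0 :: t := by
  have hmem : (0:ℝ) ∈ X.sort (· ≤ ·) := (Finset.mem_sort _).2 h0
  have hne : X.sort (· ≤ ·) ≠ [] := List.ne_nil_of_mem hmem
  obtain ⟨a, t, hat⟩ := List.exists_cons_of_ne_nil hne
  have hs := Finset.pairwise_sort X (· ≤ ·)
  rw [hat] at hs hmem
  rw [List.pairwise_cons] at hs
  have ha : a ∈ X := (Finset.mem_sort _).1 (by rw [hat]; exact List.mem_cons_self)
  have ha0 : 0 ≤ a := hX a ha
  rcases List.mem_cons.1 hmem with h | h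
  · exact ⟨t, by rw [hat, ← h]⟩
  · have : a ≤ 0 := hs.1 0 h
    have : a = 0 := le_antisymm this ha0
    exact ⟨t, by rw [hat, this]⟩

lemma lex_of_witness : ∀ (l1 l2 : List ℝ), List.Pairwise (· < ·) l1 → List.Pairwise (· < ·) l2 →
    l1.length = l2.length →
    ∀ w, w ∈ l1 → w ∉ l2 → (∀ t, t < w → (t ∈ l1 ↔ t ∈ l2)) →
    List.Lex (· < ·) l1 l2 := by
  intro l1
  induction l1 with
  | nil => intro l2 _ _ _ w hw; simp at hw
  | cons x t1 ih =>
      intro l2 hs1 hs2 hlen w hw hnw hagree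
      cases l2 with
      | nil => simp at hlen
      | cons y t2 =>
          simp only [List.length_cons, Nat.succ_inj] at hlen
          rw [List.pairwise_cons] at hs1 hs2
          rcases lt_trichotomy x y with hxy | hxy | hxy
          · exact List.Lex.rel hxy
          · subst hxy
            have hwx : w ≠ x := by
              intro h; subst h; exact hnw List.mem_cons_self
            have hwt1 : w ∈ t1 := by
              rcases List.mem_cons.1 hw with h | h
              · exact absurd h hwx
              · exact h
            have hxw : x < w := hs1.1 w hwt1
            apply List.Lex.cons
            apply ih t2 hs1.2 hs2.2 hlen w hwt1 (fun h => hnw (List.mem_cons_of_mem _ h))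
            intro t ht
            constructor
            · intro h
              have h2 : t ∈ x :: t2 := (hagree t ht).1 (List.mem_cons_of_mem _ h)
              rcases List.mem_cons.1 h2 with h3 | h3
              · subst h3; exact absurd (hs1.1 t h) (lt_irrefl t)
              · exact h3
            · intro h
              have h2 : t ∈ x :: t1 := (hagree t ht).2 (List.mem_cons_of_mem _ h)
              rcases List.mem_cons.1 h2 with h3 | h3
              · subst h3; exact absurd (hs2.1 t h) (lt_irrefl t)
              · exact h3
          · -- y < x : impossible
            exfalso
            have hynl1 : y ∉ x :: t1 := by
              intro h
              rcases List.mem_cons.1 h with h2 | h2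
              · subst h2; exact lt_irrefl y hxy
              · exact absurd (hs1.1 y h2) (by intro h3; linarith)
            have hwx : x ≤ w := by
              rcases List.mem_cons.1 hw with h | h
              · rw [h]
              · exact le_of_lt (hs1.1 w h)
            have hyw : y < w := lt_of_lt_of_le hxy hwx
            exact hynl1 ((hagree y hyw).2 List.mem_cons_self)

lemma bridge {S : Finset Real.Angle} {p q : Real.Angle} (hp : p ∈ S) (hq : q ∈ S)
    (h : lexLt (gapSeq S p) (gapSeq S q)) : setLt (Dset S p) (Dset S q) := by
  have hcard : (Dset S p).card = (Dset S q).card := by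
    unfold Dset
    rw [Finset.card_image_of_injective _ (cw_injective p),
      Finset.card_image_of_injective _ (cw_injective q)]
  have h0p : (0:ℝ) ∈ Dset S p := by
    unfold Dset; rw [Finset.mem_image]; exact ⟨p, hp, cw_self p⟩
  have h0q : (0:ℝ) ∈ Dset S q := by
    unfold Dset; rw [Finset.mem_image]; exact ⟨q, hq, cw_self q⟩
  have hposp : ∀ x ∈ Dset S p, 0 ≤ x := by
    unfold Dset; intro x hx; rw [Finset.mem_image] at hx
    obtain ⟨z, _, rfl⟩ := hx; exact cw_nonneg _ _
  have hposq : ∀ x ∈ Dset S q, 0 ≤ x := by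
    unfold Dset; intro x hx; rw [Finset.mem_image] at hx
    obtain ⟨z, _, rfl⟩ := hx; exact cw_nonneg _ _
  obtain ⟨t1, ht1⟩ := sort_head_zero h0p hposp
  obtain ⟨t2, ht2⟩ := sort_head_zero h0q hposq
  have hlen : t1.length = t2.length := by
    have e1 : (0 :: t1).length = (Dset S p).card := by
      rw [← ht1]; exact Finset.length_sort _
    have e2 : (0 :: t2).length = (Dset S q).card := by
      rw [← ht2]; exact Finset.length_sort _
    simp only [List.length_cons] at e1 e2
    omega
  have hl : List.Lex (· < ·) (dists S p) (dists S q) := by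
    rw [gapSeq_eq_diffs, gapSeq_eq_diffs, dists_eq_sort, dists_eq_sort, ht1, ht2] at h
    rw [dists_eq_sort, dists_eq_sort, ht1, ht2]
    exact List.Lex.cons ((lemA t1 t2 0 hlen).1 h)
  by_cases heq : Dset S p = Dset S q
  · exfalso
    rw [dists_eq_sort, dists_eq_sort, heq] at hl
    exact lex_irrefl _ hl
  rcases setLt_or heq with hlt | hlt
  · exact hlt
  · exfalso
    obtain ⟨w, hw1, hw2, hw3⟩ := hlt
    have : List.Lex (· < ·) (dists S q) (dists S p) := by
      rw [dists_eq_sort, dists_eq_sort]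
      apply lex_of_witness _ _ (Finset.sortedLT_sort _).pairwise (Finset.sortedLT_sort _).pairwise
        (by rw [Finset.length_sort, Finset.length_sort, hcard])
        w ((Finset.mem_sort _).2 hw1) (fun hh => hw2 ((Finset.mem_sort _).1 hh))
      intro t ht
      rw [Finset.mem_sort, Finset.mem_sort]
      exact hw3 t ht
    exact lex_asymm hl this




lemma core {B : Finset ℝ} (hB : ∀ x ∈ B, 0 ≤ x ∧ x < 2*π) (h0 : (0:ℝ) ∈ B)
    (hpi : (π:ℝ) ∉ B) {c : ℝ} (hcB : c ∈ B) (hc0 : c ≠ 0)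
    (hlt : setLt (rot B c) B) :
    ∃ e, e ∈ insert (π:ℝ) B ∧ e ≠ 0 ∧
      ¬ setLt (insert (π:ℝ) B) (rot (insert (π:ℝ) B) e) := by
  obtain ⟨m, hm1, hm2, hstar⟩ := hlt
  have hpip : (0:ℝ) < π := pi_pos
  obtain ⟨hc1', hc2⟩ := hB c hcB
  have hc1 : 0 < c := lt_of_le_of_ne hc1' (Ne.symm hc0)
  set A := insert (π:ℝ) B with hAdef
  have hAb : ∀ x ∈ A, 0 ≤ x ∧ x < 2*π := by
    intro x hx
    rcases Finset.mem_insert.1 hx with rfl | hx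
    · constructor <;> linarith
    · exact hB x hx
  have hm0 : 0 ≤ m ∧ m < 2*π := rot_bounds hB hc1.le hc2 m hm1
  have star' : ∀ t, 0 ≤ t → t < 2*π → t < m →
      ((if t + c < 2*π then t + c else t + c - 2*π) ∈ B ↔ t ∈ B) := by
    intro t h1 h2 h3
    exact (mem_rot hB hc1.le hc2 h1 h2).symm.trans (hstar t h3)
  have hcpi : c ≠ π := fun h => hpi (h ▸ hcB)
  have hbothneg : ∀ {e : ℝ}, 0 ≤ e → e < 2*π → ∀ {t : ℝ}, t < 0 →
      (t ∈ A ↔ t ∈ rot A e) := by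
    intro e he1 he2 t htn
    exact iff_of_false (fun h => absurd (hAb t h).1 (not_le.2 htn))
      (fun h => absurd ((rot_bounds hAb he1 he2 t h).1) (not_le.2 htn))
  have hmemAB : ∀ {t : ℝ}, t ≠ π → (t ∈ A ↔ t ∈ B) := by
    intro t htpi
    rw [hAdef, Finset.mem_insert]
    simp [htpi]
  by_cases hcH : c < π
  · -- Case I : c < π, e = c always works
    refine ⟨c, Finset.mem_insert_of_mem hcB, hc0, ?_⟩
    by_cases hb : π - c < m
    · -- I.a : witness π - c
      apply not_setLt (π - c)
      · rw [mem_rot hAb hc1.le hc2 (by linarith) (by linarith),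
          if_pos (show π - c + c < 2*π by linarith),
          show π - c + c = π from by ring]
        exact Finset.mem_insert_self _ _
      · intro hx
        rcases Finset.mem_insert.1 hx with h | h
        · exact hc0 (by linarith)
        · have hzz := star' (π - c) (by linarith) (by linarith) hb
          rw [if_pos (show π - c + c < 2*π by linarith),
            show π - c + c = π from by ring] at hzz
          exact hpi (hzz.2 h)
      · intro t ht
        by_cases htn : t < 0
        · exact hbothneg hc1.le hc2 htn
        push_neg at htn
        rw [mem_rot hAb hc1.le hc2 htn (by linarith),
          if_pos (show t + c < 2*π by linarith)]
        rw [hmemAB (show t ≠ π by linarith), hmemAB (show t + c ≠ π by linarith)]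
        have e3 := star' t htn (by linarith) (by linarith)
        rw [if_pos (show t + c < 2*π by linarith)] at e3
        exact e3.symm
    · -- I.b : m ≤ π - c, witness m
      push_neg at hb
      apply not_setLt m
      · exact Finset.image_subset_image (Finset.subset_insert _ _) hm1
      · intro hx
        rcases Finset.mem_insert.1 hx with h | h
        · have : m < π := by linarith
          exact absurd h (by linarith)
        · exact hm2 h
      · intro t ht
        by_cases htn : t < 0
        · exact hbothneg hc1.le hc2 htn
        push_neg at htn
        rw [mem_rot hAb hc1.le hc2 htn (by linarith),
          if_pos (show t + c < 2*π by linarith)]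
        rw [hmemAB (show t ≠ π by linarith), hmemAB (show t + c ≠ π by linarith)]
        have e3 := star' t htn (by linarith) (by linarith)
        rw [if_pos (show t + c < 2*π by linarith)] at e3
        exact e3.symm
  · -- c > π
    push_neg at hcH
    have hcH' : π < c := lt_of_le_of_ne hcH (Ne.symm hcpi)
    rcases lt_trichotomy m π with hmlt | hmeq | hmgt
    · -- Case II : m < π, e = c, witness m
      refine ⟨c, Finset.mem_insert_of_mem hcB, hc0, ?_⟩
      apply not_setLt m
      · exact Finset.image_subset_image (Finset.subset_insert _ _) hm1
      · intro hx
        rcases Finset.mem_insert.1 hx with h | h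
        · exact absurd h (by linarith)
        · exact hm2 h
      · intro t ht
        by_cases htn : t < 0
        · exact hbothneg hc1.le hc2 htn
        push_neg at htn
        rw [mem_rot hAb hc1.le hc2 htn (by linarith)]
        have e3 := star' t htn (by linarith) (by linarith)
        by_cases hcc : t + c < 2*π
        · rw [if_pos hcc] at e3 ⊢
          rw [hmemAB (show t ≠ π by linarith), hmemAB (show t + c ≠ π by linarith)]
          exact e3.symm
        · rw [if_neg hcc] at e3 ⊢
          push_neg at hcc
          rw [hmemAB (show t ≠ π by linarith),
            hmemAB (show t + c - 2*π ≠ π by intro h; linarith)]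
          exact e3.symm
    · -- Case IV : m = π
      subst hmeq
      have hsB : 2*π - c ∈ B := by
        have hzz := star' (2*π - c) (by linarith) (by linarith) (by linarith)
        rw [if_neg (show ¬ (2*π - c + c < 2*π) by intro h; linarith),
          show 2*π - c + c - 2*π = 0 from by ring] at hzz
        exact hzz.1 h0
      have hpis : c - π ∈ B := by
        have := (mem_rot hB hc1.le hc2 (by linarith) (by linarith)).1 hm1
        rw [if_neg (show ¬ (π + c < 2*π) by intro h; linarith),
          show π + c - 2*π = c - π from by ring] at this
        exact this
      by_cases F1 : setLt A (rot A c)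
      · -- e = 2π - c
        refine ⟨2*π - c, Finset.mem_insert_of_mem hsB, by intro h; linarith, ?_⟩
        obtain ⟨β, hβA, hβrc, hagree⟩ := F1
        obtain ⟨hβ1, hβ2⟩ := hAb β hβA
        have hβgt : π < β := by
          by_contra hle
          push_neg at hle
          apply hβrc
          rw [mem_rot hAb hc1.le hc2 hβ1 hβ2]
          by_cases hbc : β + c < 2*π
          · rw [if_pos hbc]
            have hβπ : β < π := by linarith
            have e3 := star' β hβ1 hβ2 hβπ
            rw [if_pos hbc] at e3
            have hβB : β ∈ B := (hmemAB (by linarith)).1 hβA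
            exact Finset.mem_insert_of_mem (e3.2 hβB)
          · rw [if_neg hbc]
            push_neg at hbc
            rcases eq_or_lt_of_le hle with hβπ | hβπ
            · rw [hβπ, show π + c - 2*π = c - π from by ring]
              exact Finset.mem_insert_of_mem hpis
            · have e3 := star' β hβ1 hβ2 hβπ
              rw [if_neg (by linarith)] at e3
              have hβB : β ∈ B := (hmemAB (by linarith)).1 hβA
              exact Finset.mem_insert_of_mem (e3.2 hβB)
        have hβnA : β + c - 2*π ∉ A := by
          intro h
          apply hβrc
          rw [mem_rot hAb hc1.le hc2 hβ1 hβ2, if_neg (show ¬ (β + c < 2*π) by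
            intro hh; linarith)]
          exact h
        apply not_setLt (β + c - 2*π) ?_ hβnA
        · intro t ht
          by_cases htn : t < 0
          · exact hbothneg (by linarith) (by linarith) htn
          push_neg at htn
          have ht2 : t < 2*π := by linarith
          rw [mem_rot hAb (by linarith) (by linarith) htn ht2,
            if_pos (show t + (2*π - c) < 2*π by linarith)]
          have hg1 := hagree (t + (2*π - c)) (by linarith)
          rw [mem_rot hAb hc1.le hc2 (by linarith) (by linarith),
            if_neg (show ¬ (t + (2*π - c) + c < 2*π) by intro hh; linarith),
            show t + (2*π - c) + c - 2*π = t from by ring] at hg1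
          exact hg1.symm
        · rw [mem_rot hAb (by linarith) (by linarith) (by linarith) (by linarith),
            if_pos (show β + c - 2*π + (2*π - c) < 2*π by linarith),
            show β + c - 2*π + (2*π - c) = β from by ring]
          exact hβA
      · exact ⟨c, Finset.mem_insert_of_mem hcB, hc0, F1⟩
    · -- Case III : m > π, e = 2π - c, witness c - π
      have hsB : 2*π - c ∈ B := by
        have hzz := star' (2*π - c) (by linarith) (by linarith) (by linarith)
        rw [if_neg (show ¬ (2*π - c + c < 2*π) by intro h; linarith),
          show 2*π - c + c - 2*π = 0 from by ring] at hzz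
        exact hzz.symm.2 h0
      refine ⟨2*π - c, Finset.mem_insert_of_mem hsB, by intro h; linarith, ?_⟩
      apply not_setLt (c - π)
      · rw [mem_rot hAb (by linarith) (by linarith) (by linarith) (by linarith),
          if_pos (show c - π + (2*π - c) < 2*π by linarith),
          show c - π + (2*π - c) = π from by ring]
        exact Finset.mem_insert_self _ _
      · intro hx
        rcases Finset.mem_insert.1 hx with h | h
        · linarith
        · have hzz := star' π (by linarith) (by linarith) hmgt
          rw [if_neg (show ¬ (π + c < 2*π) by intro hh; linarith),
            show π + c - 2*π = c - π from by ring] at hzz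
          exact hpi (hzz.1 h)
      · intro t ht
        by_cases htn : t < 0
        · exact hbothneg (by linarith) (by linarith) htn
        push_neg at htn
        rw [mem_rot hAb (by linarith) (by linarith) htn (by linarith),
          if_pos (show t + (2*π - c) < 2*π by linarith)]
        rw [hmemAB (show t ≠ π by linarith),
          hmemAB (show t + (2*π - c) ≠ π by intro h; linarith)]
        have e3 := star' (t + (2*π - c)) (by linarith) (by linarith) (by linarith)
        rw [if_neg (show ¬ (t + (2*π - c) + c < 2*π) by intro hh; linarith),
          show t + (2*π - c) + c - 2*π = t from by ring] at e3
        exact e3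


end Stmt8Helpers

theorem stmt8 (S : Finset Real.Angle) (hasym : RotAsym S)
    (L : Real.Angle) (hL : TrueLeader S L)
    (r : Real.Angle) (hr : r ∈ S) (hrL : r ≠ L) (hU : Undecided S r) :
    antipode r ∈ S := by
  by_contra hna
  obtain ⟨hrS2, hA0, hA1, hxor⟩ := hU
  have hC0 : C0 S r = S := Finset.erase_eq_of_notMem hna
  have hnotTL : ¬ TrueLeader S r := by
    rintro ⟨-, h2⟩
    exact lex_asymm (h2 L hL.1 (Ne.symm hrL)) (hL.2 r hr hrL)
  have hTL1 : TrueLeader (C1 S r) r := by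
    rcases hxor with ⟨h, -⟩ | ⟨h, -⟩
    · exact absurd (hC0 ▸ h) hnotTL
    · exact h
  have hBb : ∀ x ∈ Dset S r, 0 ≤ x ∧ x < 2*π := by
    intro x hx
    simp only [Dset, Finset.mem_image] at hx
    obtain ⟨z, _, rfl⟩ := hx
    exact ⟨cw_nonneg _ _, cw_lt_two_pi _ _⟩
  have h0B : (0:ℝ) ∈ Dset S r := by
    simp only [Dset, Finset.mem_image]
    exact ⟨r, hr, cw_self r⟩
  have hpiB : (π:ℝ) ∉ Dset S r := by
    intro h
    simp only [Dset, Finset.mem_image] at h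
    obtain ⟨x, hxS, hcx⟩ := h
    have hco := coe_cw r x
    rw [hcx] at hco
    have hx : x = antipode r := by
      unfold antipode
      have h2 : x - r = ((π:ℝ) : Real.Angle) := hco.symm
      rw [sub_eq_iff_eq_add] at h2
      rw [h2, add_comm]
    rw [hx] at hxS
    exact hna hxS
  have hcB : cw r L ∈ Dset S r := by
    simp only [Dset, Finset.mem_image]
    exact ⟨L, hL.1, rfl⟩
  have hc0 : cw r L ≠ 0 := fun h => hrL (cw_eq_zero_iff.1 h).symm
  have hset : setLt (rot (Dset S r) (cw r L)) (Dset S r) := by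
    have hb := bridge hL.1 hr (hL.2 r hr hrL)
    rwa [Dset_rot S r L] at hb
  obtain ⟨e, heA, he0, hnot⟩ := core hBb h0B hpiB hcB hc0 hset
  have hAeq : insert (π:ℝ) (Dset S r) = Dset (C1 S r) r := by
    show insert (π:ℝ) (Dset S r) = (insert (antipode r) S).image (cw r)
    rw [Finset.image_insert, cw_antipode]
    rfl
  rw [hAeq] at heA hnot
  obtain ⟨p, hpC1, hpe⟩ := by
    simp only [Dset, Finset.mem_image] at heA
    exact heA
  have hpr : p ≠ r := by
    rintro rfl
    rw [cw_self] at hpe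
    exact he0 hpe.symm
  have hlex := hTL1.2 p hpC1 hpr
  have hset2 : setLt (Dset (C1 S r) r) (Dset (C1 S r) p) :=
    bridge (Finset.mem_insert_of_mem hr) hpC1 hlex
  rw [Dset_rot (C1 S r) r p, hpe] at hset2
  exact hnot hset2
end
end
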